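/- arXiv:2207.00832 — 3 statements merged into one kernel-verified Lean document; each statement's English description precedes it below -/
import Mathlib

section
/- For each error ball B ∈ {B^SD, B^SI}, there exist real constants c1, c2 and an even integer n0 such that for every even n ≥ n0 and each N ∈ {1,2}, (3/2)·log2 n + c1 ≤ ρ_b(n,N;B) ≤ (3/2)·log2 n + c2. -/
namespace BRC

/-- Hamming distance between two binary words (of the same length). -/
def hammingDist (x y : List Bool) : ℕ :=
  (List.zip x y).countP (fun p => p.1 != p.2)

/-- `balanced n` is the set `U_n` of binary words of length `n` with exactly `n/2` ones. -/
def balanced (n : ℕ) : Set (List Bool) :=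
  {x | x.length = n ∧ x.count true = n / 2}

/-- `B^S(x)`: words obtained from `x` by at most one substitution. -/
def BS (x : List Bool) : Set (List Bool) :=
  {y | y.length = x.length ∧ hammingDist x y ≤ 1}

/-- `B^D(x)`: words obtained from `x` by deleting one symbol. -/
def BD (x : List Bool) : Set (List Bool) :=
  {y | ∃ (u v : List Bool) (b : Bool), x = u ++ b :: v ∧ y = u ++ v}

/-- `B^I(x)`: words obtained from `x` by inserting one symbol. -/
def BI (x : List Bool) : Set (List Bool) :=
  {y | ∃ (u v : List Bool) (b : Bool), x = u ++ v ∧ y = u ++ b :: v}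

def BDI (x : List Bool) : Set (List Bool) := BD x ∪ BI x
def BSD (x : List Bool) : Set (List Bool) := BS x ∪ BD x
def BSI (x : List Bool) : Set (List Bool) := BS x ∪ BI x
def Bedit (x : List Bool) : Set (List Bool) := BS x ∪ BD x ∪ BI x

/-- `C` is a balanced `(n,N;B)`-reconstruction code: `C ⊆ U_n` and `ν(C;B) < N`. -/
def reconCode (n N : ℕ) (B : List Bool → Set (List Bool)) (C : Set (List Bool)) : Prop :=
  C ⊆ balanced n ∧ ∀ x ∈ C, ∀ y ∈ C, x ≠ y → (B x ∩ B y).ncard < N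

/-- `ρ_b(n,N;B)`: optimal redundancy of a balanced `(n,N;B)`-reconstruction code. -/
noncomputable def rho (n N : ℕ) (B : List Bool → Set (List Bool)) : ℝ :=
  sInf {r : ℝ | ∃ C : Set (List Bool),
    reconCode n N B C ∧ r = (n : ℝ) - Real.logb 2 (C.ncard : ℝ)}

/-- `(10)^m`. -/
def pat10 (m : ℕ) : List Bool := (List.replicate m [true, false]).flatten
/-- `(01)^m`. -/
def pat01 (m : ℕ) : List Bool := (List.replicate m [false, true]).flatten

/-- Type-A-confusable with parameter `m`: `{c, c'} = {(10)^m, (01)^m}`. -/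
def TypeAWith (m : ℕ) (x y : List Bool) : Prop :=
  ∃ u v : List Bool,
    (x = u ++ pat10 m ++ v ∧ y = u ++ pat01 m ++ v) ∨
    (x = u ++ pat01 m ++ v ∧ y = u ++ pat10 m ++ v)

/-- Type-A-confusable (with some `m ≥ 1`). -/
def TypeA (x y : List Bool) : Prop := ∃ m, 1 ≤ m ∧ TypeAWith m x y

/-- Type-B-confusable with parameter `m`:
`{c, c'} = {0 1^m, 1^m 0}` or `{c, c'} = {1 0^m, 0^m 1}`. -/
def TypeBWith (m : ℕ) (x y : List Bool) : Prop :=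
  ∃ u v : List Bool,
    ((x = u ++ (false :: List.replicate m true) ++ v ∧
        y = u ++ (List.replicate m true ++ [false]) ++ v) ∨
     (x = u ++ (List.replicate m true ++ [false]) ++ v ∧
        y = u ++ (false :: List.replicate m true) ++ v)) ∨
    ((x = u ++ (true :: List.replicate m false) ++ v ∧
        y = u ++ (List.replicate m false ++ [true]) ++ v) ∨
     (x = u ++ (List.replicate m false ++ [true]) ++ v ∧
        y = u ++ (true :: List.replicate m false) ++ v))

/-- Type-B-confusable (with some `m ≥ 2`). -/
def TypeB (x y : List Bool) : Prop := ∃ m, 2 ≤ m ∧ TypeBWith m x y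

/-- Number of runs of a binary word. -/
def numRuns (x : List Bool) : ℕ := (x.destutter (· ≠ ·)).length

/-- `V_{n-1}`: binary words of length `n-1` with Hamming weight `n/2` or `n/2 - 1`. -/
def Vset (n : ℕ) : Set (List Bool) :=
  {x | x.length = n - 1 ∧ (x.count true = n / 2 ∨ x.count true = n / 2 - 1)}

/-- VT weighted sum `Σ_{i=1}^n i·x_i` (positions indexed from 1). -/
def vtSum (x : List Bool) : ℕ :=
  (x.zipIdx.map (fun p => if p.1 then p.2 + 1 else 0)).sum

/-- The balanced Varshamov–Tenengolts code `BVT_a(n)`. -/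
def BVT (n a : ℕ) : Set (List Bool) :=
  {x | x ∈ balanced n ∧ vtSum x ≡ a [MOD n + 1]}

/-- `R_2^b(n,1,m)`: balanced words of length `n` all of whose runs have length at most `m`. -/
def R1 (n m : ℕ) : Set (List Bool) :=
  {x | x ∈ balanced n ∧ ∀ b : Bool, ¬ (List.replicate (m + 1) b <:+: x)}

section Aux
open List

/-! ### Hamming distance basics -/

lemma hd_cons (a b : Bool) (x y : List Bool) :
    hammingDist (a :: x) (b :: y) = hammingDist x y + (if a = b then 0 else 1) := by
  simp only [hammingDist, List.zip_cons_cons, List.countP_cons]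
  cases a <;> cases b <;> simp

lemma hd_self (x : List Bool) : hammingDist x x = 0 := by
  induction x with
  | nil => rfl
  | cons a t ih => simp [hd_cons, ih]

lemma hd_symm (x y : List Bool) : hammingDist x y = hammingDist y x := by
  induction x generalizing y with
  | nil => cases y <;> rfl
  | cons a t ih =>
    cases y with
    | nil => rfl
    | cons b s => cases a <;> cases b <;> simp [hd_cons, ih]

lemma eq_of_hd_eq_zero {x y : List Bool} (hl : x.length = y.length)
    (h : hammingDist x y = 0) : x = y := by
  induction x generalizing y with
  | nil => cases y with | nil => rfl | cons b s => simp at hl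
  | cons a t ih =>
    cases y with
    | nil => simp at hl
    | cons b s =>
      rw [hd_cons] at h
      by_cases hab : a = b
      · simp only [hab, if_pos rfl, add_zero] at h
        simp only [List.length_cons, Nat.add_right_cancel_iff] at hl
        rw [hab, ih hl h]
      · simp [hab] at h

lemma hd_pos_of_ne {x y : List Bool} (hl : x.length = y.length) (h : x ≠ y) :
    1 ≤ hammingDist x y := by
  by_contra hc
  exact h (eq_of_hd_eq_zero hl (by omega))

lemma hd_triangle (x y z : List Bool) (h1 : x.length = y.length)
    (h2 : y.length = z.length) :
    hammingDist x z ≤ hammingDist x y + hammingDist y z := by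
  induction x generalizing y z with
  | nil => cases y with
    | nil => cases z with
      | nil => simp [hd_self]
      | cons c r => simp at h2
    | cons b s => simp at h1
  | cons a t ih =>
    cases y with
    | nil => simp at h1
    | cons b s =>
      cases z with
      | nil => simp at h2
      | cons c r =>
        simp only [List.length_cons, Nat.add_right_cancel_iff] at h1 h2
        have := ih s r h1 h2
        cases a <;> cases b <;> cases c <;> simp [hd_cons] <;> omega

lemma hd_set_le (x : List Bool) (i : ℕ) (b : Bool) :
    hammingDist x (x.set i b) ≤ 1 := by
  induction x generalizing i with
  | nil => simp [hd_self]
  | cons a t ih =>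
    cases i with
    | zero =>
      rw [List.set_cons_zero, hd_cons]
      rw [hd_self]
      split <;> omega
    | succ j =>
      rw [List.set_cons_succ, hd_cons]
      have := ih j
      simp only [if_pos rfl, add_zero]
      exact this

lemma count_le_of_hd {x y : List Bool} (hl : x.length = y.length) :
    y.count true ≤ x.count true + hammingDist x y := by
  induction x generalizing y with
  | nil => cases y with | nil => simp | cons b s => simp at hl
  | cons a t ih =>
    cases y with
    | nil => simp at hl
    | cons b s =>
      simp only [List.length_cons, Nat.add_right_cancel_iff] at hl
      have := ih hl
      cases a <;> cases b <;> simp [hd_cons, List.count_cons] <;> omega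

/-! ### Structure of words at Hamming distance 1 and 2 -/

lemma hd_one_struct {x y : List Bool} (hl : x.length = y.length)
    (h : hammingDist x y = 1) :
    ∃ (p : List Bool) (c : Bool) (s : List Bool),
      x = p ++ c :: s ∧ y = p ++ (!c) :: s := by
  induction x generalizing y with
  | nil => cases y with | nil => simp [hammingDist] at h | cons b s => simp at hl
  | cons a t ih =>
    cases y with
    | nil => simp at hl
    | cons b s =>
      simp only [List.length_cons, Nat.add_right_cancel_iff] at hl
      rw [hd_cons] at h
      by_cases hab : a = b
      · simp only [hab, if_pos rfl, add_zero] at h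
        obtain ⟨p, c, s', hx, hy⟩ := ih hl h
        exact ⟨b :: p, c, s', by simp [hx, hab], by simp [hy]⟩
      · simp only [if_neg hab] at h
        have hts : t = s := eq_of_hd_eq_zero hl (by omega)
        refine ⟨[], a, t, by simp, ?_⟩
        have : b = !a := by cases a <;> cases b <;> simp_all
        simp [this, hts]

lemma hd_two_struct {x y : List Bool} (hl : x.length = y.length)
    (h : hammingDist x y = 2) :
    ∃ (p : List Bool) (c : Bool) (q : List Bool) (d : Bool) (s : List Bool),
      x = p ++ c :: (q ++ d :: s) ∧ y = p ++ (!c) :: (q ++ (!d) :: s) := by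
  induction x generalizing y with
  | nil => cases y with | nil => simp [hammingDist] at h | cons b s => simp at hl
  | cons a t ih =>
    cases y with
    | nil => simp at hl
    | cons b s =>
      simp only [List.length_cons, Nat.add_right_cancel_iff] at hl
      rw [hd_cons] at h
      by_cases hab : a = b
      · simp only [hab, if_pos rfl, add_zero] at h
        obtain ⟨p, c, q, d, s', hx, hy⟩ := ih hl h
        exact ⟨b :: p, c, q, d, s', by simp [hx, hab], by simp [hy]⟩
      · simp only [if_neg hab] at h
        obtain ⟨p, d, s', hx, hy⟩ := hd_one_struct hl (by omega)
        have hba : b = !a := by cases a <;> cases b <;> simp_all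
        exact ⟨[], a, p, d, s', by simp [hx], by simp [hy, hba]⟩

lemma hd_append_left (p x y : List Bool) :
    hammingDist (p ++ x) (p ++ y) = hammingDist x y := by
  induction p with
  | nil => rfl
  | cons a t ih => simp [hd_cons, ih]

end Aux
section Aux2
open List

/-! ### Two common supersequences for close words -/

lemma two_common {x y : List Bool} (hl : x.length = y.length)
    (h1 : 1 ≤ hammingDist x y) (h2 : hammingDist x y ≤ 2) :
    ∃ z1 z2 : List Bool, z1 ≠ z2 ∧
      z1.length = x.length ∧ z2.length = x.length ∧
      hammingDist x z1 ≤ 1 ∧ hammingDist y z1 ≤ 1 ∧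
      hammingDist x z2 ≤ 1 ∧ hammingDist y z2 ≤ 1 := by
  interval_cases h : (hammingDist x y)
  · -- distance 1 : take x and y themselves
    refine ⟨x, y, ?_, rfl, hl.symm, by simp [hd_self], by rw [hd_symm]; omega,
      by omega, by simp [hd_self]⟩
    intro hxy; rw [hxy, hd_self] at h; omega
  · obtain ⟨p, c, q, d, s, hx, hy⟩ := hd_two_struct hl h
    refine ⟨p ++ c :: (q ++ (!d) :: s), p ++ (!c) :: (q ++ d :: s), ?_, ?_, ?_, ?_, ?_, ?_, ?_⟩
    · intro hzz
      have := List.append_cancel_left hzz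
      simp at this
    · simp [hx]
    · simp [hx]
    · rw [hx, hd_append_left, hd_cons, hd_append_left, hd_cons]
      simp only [hd_self]
      cases c <;> cases d <;> simp
    · rw [hy, hd_append_left, hd_cons, hd_append_left, hd_cons]
      simp only [hd_self]
      cases c <;> cases d <;> simp
    · rw [hx, hd_append_left, hd_cons, hd_append_left, hd_cons]
      simp only [hd_self]
      cases c <;> cases d <;> simp
    · rw [hy, hd_append_left, hd_cons, hd_append_left, hd_cons]
      simp only [hd_self]
      cases c <;> cases d <;> simp

/-! ### Finsets of words -/

def wordsF : ℕ → Finset (List Bool)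
  | 0 => {[]}
  | n + 1 => ((wordsF n).image (List.cons true)) ∪ ((wordsF n).image (List.cons false))

lemma mem_wordsF {n : ℕ} {l : List Bool} : l ∈ wordsF n ↔ l.length = n := by
  induction n generalizing l with
  | zero => cases l <;> simp [wordsF]
  | succ m ih =>
    simp only [wordsF, Finset.mem_union, Finset.mem_image]
    constructor
    · rintro (⟨a, ha, rfl⟩ | ⟨a, ha, rfl⟩) <;> simp [ih.mp ha]
    · intro hlen
      cases l with
      | nil => simp at hlen
      | cons b t =>
        have ht : t ∈ wordsF m := ih.mpr (by simpa using hlen)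
        cases b
        · exact Or.inr ⟨t, ht, rfl⟩
        · exact Or.inl ⟨t, ht, rfl⟩

def WF (n w : ℕ) : Finset (List Bool) := (wordsF n).filter (fun l => l.count true = w)

lemma mem_WF {n w : ℕ} {l : List Bool} :
    l ∈ WF n w ↔ l.length = n ∧ l.count true = w := by
  simp [WF, Finset.mem_filter, mem_wordsF]

lemma card_WF (n : ℕ) : ∀ w, (WF n w).card = n.choose w := by
  induction n with
  | zero =>
    intro w
    cases w with
    | zero =>
      have : WF 0 0 = {([] : List Bool)} := by
        ext l
        simp only [mem_WF, Finset.mem_singleton, List.length_eq_zero_iff]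
        constructor
        · rintro ⟨rfl, -⟩; rfl
        · rintro rfl; simp
      rw [this]; simp
    | succ v =>
      have : WF 0 (v + 1) = ∅ := by
        ext l
        simp only [mem_WF, Finset.notMem_empty, iff_false, List.length_eq_zero_iff, not_and]
        rintro rfl; simp
      rw [this]; simp
  | succ m ih =>
    intro w
    cases w with
    | zero =>
      have : WF (m + 1) 0 = {List.replicate (m + 1) false} := by
        ext l
        simp only [mem_WF, Finset.mem_singleton]
        constructor
        · rintro ⟨h1, h2⟩
          rw [List.eq_replicate_iff]
          refine ⟨h1, fun b hb => ?_⟩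
          cases b
          · rfl
          · exact absurd hb (List.count_eq_zero.mp h2)
        · rintro rfl
          refine ⟨by simp, ?_⟩
          rw [List.count_eq_zero]
          intro hmem
          have := List.eq_of_mem_replicate hmem
          simp at this
      rw [this]; simp
    | succ v =>
      have hsplit : WF (m + 1) (v + 1) =
          ((WF m v).image (List.cons true)) ∪ ((WF m (v + 1)).image (List.cons false)) := by
        ext l
        simp only [mem_WF, Finset.mem_union, Finset.mem_image]
        constructor
        · rintro ⟨h1, h2⟩
          cases l with
          | nil => simp at h1
          | cons b t =>
            cases b
            · refine Or.inr ⟨t, ⟨by simpa using h1, by simpa [List.count_cons] using h2⟩, rfl⟩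
            · refine Or.inl ⟨t, ⟨by simpa using h1, ?_⟩, rfl⟩
              simp [List.count_cons] at h2
              omega
        · rintro (⟨t, ⟨h1, h2⟩, rfl⟩ | ⟨t, ⟨h1, h2⟩, rfl⟩) <;>
            simp [List.count_cons, h1, h2]
      rw [hsplit, Finset.card_union_of_disjoint, Finset.card_image_of_injective _ List.cons_injective,
        Finset.card_image_of_injective _ List.cons_injective, ih, ih, Nat.choose_succ_succ]
      rw [Finset.disjoint_left]
      rintro l hl hr
      simp only [Finset.mem_image] at hl hr
      obtain ⟨t1, _, h1⟩ := hl
      obtain ⟨t2, _, h2⟩ := hr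
      rw [← h1] at h2
      simp at h2

end Aux2
section Aux3
open List

lemma count_set_cases {n : ℕ} (x : List Bool) (i : ℕ) (b : Bool)
    (hx : x.count true = n) :
    (x.set i b).count true = n - 1 ∨ (x.set i b).count true = n ∨
      (x.set i b).count true = n + 1 := by
  have hlen : x.length = (x.set i b).length := (List.length_set ..).symm
  have h1 : (x.set i b).count true ≤ x.count true + hammingDist x (x.set i b) :=
    count_le_of_hd hlen
  have h2 : x.count true ≤ (x.set i b).count true + hammingDist (x.set i b) x := by
    refine count_le_of_hd ?_
    exact hlen.symm
  rw [hd_symm] at h2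
  have h3 := hd_set_le x i b
  omega

lemma packing {n : ℕ} (F : Finset (List Bool)) (hF : ∀ x ∈ F, x ∈ WF n (n / 2))
    (hdist : ∀ x ∈ F, ∀ y ∈ F, hammingDist x y ≤ 2 → x = y) :
    F.card * (n + 1) ≤ 3 * n.choose (n / 2) := by
  classical
  set big : Finset (List Bool) :=
    (WF n (n / 2 - 1)) ∪ ((WF n (n / 2)) ∪ (WF n (n / 2 + 1))) with hbig
  have hlenF : ∀ x ∈ F, x.length = n := fun x hx => (mem_WF.mp (hF x hx)).1
  have hcntF : ∀ x ∈ F, x.count true = n / 2 := fun x hx => (mem_WF.mp (hF x hx)).2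
  set f : List Bool × ℕ → List Bool := fun p => p.1.set p.2 (!(p.1.getD p.2 false)) with hf
  have hdf : ∀ x i, hammingDist x (f (x, i)) ≤ 1 := fun x i => hd_set_le ..
  have hlf : ∀ x i, (f (x, i)).length = x.length := fun x i => List.length_set ..
  have hmaps : ∀ p ∈ F ×ˢ Finset.range (n + 1), f p ∈ big := by
    rintro ⟨x, i⟩ hp
    rw [Finset.mem_product] at hp
    obtain ⟨hx, -⟩ := hp
    have hc := count_set_cases x i (!(x.getD i false)) (hcntF x hx)
    have hl : (f (x, i)).length = n := by rw [hlf]; exact hlenF x hx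
    rcases hc with h | h | h
    · exact Finset.mem_union_left _ (mem_WF.mpr ⟨hl, h⟩)
    · exact Finset.mem_union_right _ (Finset.mem_union_left _ (mem_WF.mpr ⟨hl, h⟩))
    · exact Finset.mem_union_right _ (Finset.mem_union_right _ (mem_WF.mpr ⟨hl, h⟩))
  have hinj : Set.InjOn f ↑(F ×ˢ Finset.range (n + 1)) := by
    rintro ⟨x, i⟩ hp ⟨y, j⟩ hq heq
    simp only [Finset.coe_product, Set.mem_prod, Finset.mem_coe, Finset.coe_range,
      Set.mem_Iio] at hp hq
    obtain ⟨hxF, hi⟩ := hp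
    obtain ⟨hyF, hj⟩ := hq
    have hlx := hlenF x hxF
    have hly := hlenF y hyF
    -- first, x = y
    have hxy : x = y := by
      apply hdist x hxF y hyF
      have t1 : hammingDist x y ≤ hammingDist x (f (x, i)) + hammingDist (f (x, i)) y := by
        refine hd_triangle _ _ _ ?_ ?_
        · exact (hlf x i).symm
        · rw [hlf, hlx, ← hly]
      have t2 : hammingDist (f (x, i)) y = hammingDist y (f (y, j)) := by
        rw [heq, hd_symm]
      have := hdf x i
      have := hdf y j
      omega
    subst hxy
    -- now i = j
    suffices hij : i = j by rw [hij]
    by_contra hij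
    have heq' : x.set i (!(x.getD i false)) = x.set j (!(x.getD j false)) := heq
    have flip_ne : ∀ k : ℕ, ∀ hk : k < x.length,
        (x.set k (!(x.getD k false)))[k]'(by simpa using hk) = !(x[k]'hk) := by
      intro k hk
      rw [List.getElem_set]
      rw [if_pos rfl, List.getD_eq_getElem x false hk]
    rcases Nat.lt_or_ge i x.length with hi' | hi'
    · rcases Nat.lt_or_ge j x.length with hj' | hj'
      · have e1 := flip_ne i hi'
        have e3 := List.getElem_of_eq heq' (show i < (x.set i (!(x.getD i false))).length by
          simpa using hi')
        rw [e1] at e3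
        have e2 : (x.set j (!(x.getD j false)))[i]'(by simpa using hi') = x[i]'hi' := by
          rw [List.getElem_set, if_neg (fun h => hij h.symm)]
        rw [e2] at e3
        exact (Bool.not_ne_self _) e3
      · have hfix : x.set j (!(x.getD j false)) = x := List.set_eq_of_length_le hj'
        rw [hfix] at heq'
        have e1 := flip_ne i hi'
        have e3 := List.getElem_of_eq heq' (show i < (x.set i (!(x.getD i false))).length by
          simpa using hi')
        rw [e1] at e3
        exact (Bool.not_ne_self _) e3
    · rcases Nat.lt_or_ge j x.length with hj' | hj'
      · have hfix : x.set i (!(x.getD i false)) = x := List.set_eq_of_length_le hi'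
        rw [hfix] at heq'
        have e1 := flip_ne j hj'
        have e3 := List.getElem_of_eq heq'.symm (show j < (x.set j (!(x.getD j false))).length by
          simpa using hj')
        rw [e1] at e3
        exact (Bool.not_ne_self _) e3
      · rw [hlx] at hi' hj'
        omega
  have hcard := Finset.card_le_card_of_injOn f hmaps hinj
  rw [Finset.card_product, Finset.card_range] at hcard
  have hbigcard : big.card ≤ 3 * n.choose (n / 2) := by
    calc big.card ≤ (WF n (n / 2 - 1)).card + ((WF n (n / 2)) ∪ (WF n (n / 2 + 1))).card :=
          Finset.card_union_le _ _
      _ ≤ (WF n (n / 2 - 1)).card + ((WF n (n / 2)).card + (WF n (n / 2 + 1)).card) := by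
          have := Finset.card_union_le (WF n (n / 2)) (WF n (n / 2 + 1))
          omega
      _ ≤ 3 * n.choose (n / 2) := by
          rw [card_WF, card_WF, card_WF]
          have b1 := Nat.choose_le_middle (n / 2 - 1) n
          have b2 := Nat.choose_le_middle (n / 2 + 1) n
          omega
  omega

end Aux3
section Aux4
open List

/-! ### vtSum computation lemmas -/

lemma sum_map_ind (l : List Bool) :
    (l.map (fun b => if b then (1 : ℕ) else 0)).sum = l.count true := by
  induction l with
  | nil => rfl
  | cons a t ih => cases a <;> simp [List.count_cons, ih] <;> omega

lemma enumFrom_shift (l : List Bool) : ∀ k : ℕ,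
    ((List.zipIdx l (k + 1)).map (fun p => if p.1 then p.2 + 1 else 0)).sum =
      ((List.zipIdx l k).map (fun p => if p.1 then p.2 + 1 else 0)).sum + l.count true := by
  induction l with
  | nil => intro k; rfl
  | cons a t ih =>
    intro k
    rw [List.zipIdx_cons, List.zipIdx_cons, List.map_cons, List.map_cons,
      List.sum_cons, List.sum_cons, ih (k + 1), List.count_cons]
    cases a <;> simp <;> omega

lemma vtSum_cons (c : Bool) (l : List Bool) :
    vtSum (c :: l) = (if c then 1 else 0) + vtSum l + l.count true := by
  have h0 : l.zipIdx = List.zipIdx l 0 := rfl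
  unfold vtSum
  rw [List.zipIdx_cons, List.map_cons, List.sum_cons, enumFrom_shift l 0]
  cases c <;> simp <;> try omega

lemma vtSum_append (u v : List Bool) :
    vtSum (u ++ v) = vtSum u + vtSum v + u.length * v.count true := by
  induction u with
  | nil => simp [vtSum]
  | cons c u ih =>
    rw [List.cons_append, vtSum_cons, vtSum_cons, ih, List.count_append, List.length_cons]
    ring

lemma modeq_shift {m s t A B : ℕ} (h : s ≡ t [MOD m]) (key : s + A = t + B) :
    A ≡ B [MOD m] := by
  have h2 : t + A ≡ s + A [MOD m] := (h.symm).add_right A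
  rw [key] at h2
  exact Nat.ModEq.add_left_cancel' t h2

lemma cons_all (c : Bool) (w : List Bool) (hw : w = List.replicate w.length c) :
    c :: w = w ++ [c] := by
  conv_lhs => rw [hw]
  conv_rhs => rw [hw]
  rw [← List.replicate_succ]
  exact List.replicate_succ'

lemma all_true_of_count {w : List Bool} (h : w.count true = w.length) :
    w = List.replicate w.length true := by
  rw [List.eq_replicate_iff]
  refine ⟨rfl, fun b hb => ?_⟩
  cases b
  · exact ((List.count_eq_length.mp h) false hb).symm
  · rfl

lemma all_false_of_count {w : List Bool} (h : w.count true = 0) :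
    w = List.replicate w.length false := by
  rw [List.eq_replicate_iff]
  refine ⟨rfl, fun b hb => ?_⟩
  cases b
  · rfl
  · exact absurd hb (List.count_eq_zero.mp h)

/-! ### The core Varshamov–Tenengolts argument -/

lemma vt_core {n : ℕ} (u w q : List Bool) (a b : Bool)
    (hlen : u.length + w.length + q.length + 1 = n)
    (h : vtSum (u ++ a :: (w ++ q)) ≡ vtSum (u ++ (w ++ b :: q)) [MOD n + 1]) :
    u ++ a :: (w ++ q) = u ++ (w ++ b :: q) := by
  have hwl : w.count true ≤ w.length := List.count_le_length
  cases a <;> cases b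
  · -- a = false, b = false : vtSum X = vtSum Y + (count true w)
    have key : vtSum (u ++ false :: (w ++ q)) + 0 =
        vtSum (u ++ (w ++ false :: q)) + w.count true := by
      simp [vtSum_append, vtSum_cons, List.count_append, List.count_cons]
      ring
    have hc : (0 : ℕ) ≡ w.count true [MOD n + 1] := modeq_shift h key
    have he : 0 = w.count true := hc.eq_of_lt_of_lt (by omega) (by omega)
    have hw : w = List.replicate w.length false := all_false_of_count he.symm
    have : (false : Bool) :: (w ++ q) = w ++ (false :: q) := by
      rw [← List.cons_append, cons_all false w hw, List.append_assoc]
      rfl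
    rw [this]
  · -- a = false, b = true : contradiction
    have key : vtSum (u ++ false :: (w ++ q)) + (1 + u.length + w.length) =
        vtSum (u ++ (w ++ true :: q)) + w.count true := by
      simp [vtSum_append, vtSum_cons, List.count_append, List.count_cons]
      ring
    have hc : (1 + u.length + w.length) ≡ w.count true [MOD n + 1] := modeq_shift h key
    have he := hc.eq_of_lt_of_lt (by omega) (by omega)
    omega
  · -- a = true, b = false : contradiction
    have key : vtSum (u ++ true :: (w ++ q)) + 0 =
        vtSum (u ++ (w ++ false :: q)) + (1 + u.length + w.count true) := by
      simp [vtSum_append, vtSum_cons, List.count_append, List.count_cons]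
      ring
    have hc : (0 : ℕ) ≡ 1 + u.length + w.count true [MOD n + 1] := modeq_shift h key
    have he := hc.eq_of_lt_of_lt (by omega) (by omega)
    omega
  · -- a = true, b = true : vtSum X + |w| = vtSum Y + count w
    have key : vtSum (u ++ true :: (w ++ q)) + w.length =
        vtSum (u ++ (w ++ true :: q)) + w.count true := by
      simp [vtSum_append, vtSum_cons, List.count_append, List.count_cons]
      ring
    have hc : w.length ≡ w.count true [MOD n + 1] := modeq_shift h key
    have he := hc.eq_of_lt_of_lt (by omega) (by omega)
    have hw : w = List.replicate w.length true := all_true_of_count he.symm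
    have : (true : Bool) :: (w ++ q) = w ++ (true :: q) := by
      rw [← List.cons_append, cons_all true w hw, List.append_assoc]
      rfl
    rw [this]

end Aux4
section Aux5
open List

lemma mem_BD_length {z x : List Bool} (h : z ∈ BD x) : z.length + 1 = x.length := by
  obtain ⟨u, v, b, hx, hz⟩ := h
  subst hx; subst hz; simp; omega

lemma mem_BI_length {z x : List Bool} (h : z ∈ BI x) : z.length = x.length + 1 := by
  obtain ⟨u, v, b, hx, hz⟩ := h
  subst hx; subst hz; simp; omega

lemma BD_disj {n : ℕ} {x y : List Bool} (hx : x.length = n) (hy : y.length = n)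
    (hv : vtSum x ≡ vtSum y [MOD n + 1]) (hne : x ≠ y) : BD x ∩ BD y = ∅ := by
  rw [Set.eq_empty_iff_forall_notMem]
  rintro z ⟨⟨u, v, a, hx1, hz1⟩, ⟨p, qq, b, hy1, hz2⟩⟩
  rw [hz1] at hz2
  rcases List.append_eq_append_iff.mp hz2 with ⟨w', hw1, hw2⟩ | ⟨w', hw1, hw2⟩
  · -- p = u ++ w', v = w' ++ qq
    subst hw1; subst hw2
    have hx2 : x = u ++ a :: (w' ++ qq) := hx1
    have hy2 : y = u ++ (w' ++ b :: qq) := by rw [hy1, List.append_assoc]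
    have hlen : u.length + w'.length + qq.length + 1 = n := by
      rw [hx2] at hx; simp at hx; omega
    apply hne
    rw [hx2, hy2]
    refine vt_core u w' qq a b hlen ?_
    rw [← hx2, ← hy2]; exact hv
  · -- u = p ++ w', qq = w' ++ v
    subst hw1; subst hw2
    have hy2 : y = p ++ b :: (w' ++ v) := hy1
    have hx2 : x = p ++ (w' ++ a :: v) := by rw [hx1, List.append_assoc]
    have hlen : p.length + w'.length + v.length + 1 = n := by
      rw [hy2] at hy; simp at hy; omega
    apply hne
    rw [hx2, hy2]
    refine (vt_core p w' v b a hlen ?_).symm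
    rw [← hx2, ← hy2]; exact hv.symm

lemma BI_disj {n : ℕ} {x y : List Bool} (hx : x.length = n) (hy : y.length = n)
    (hv : vtSum x ≡ vtSum y [MOD n + 1]) (hne : x ≠ y) : BI x ∩ BI y = ∅ := by
  rw [Set.eq_empty_iff_forall_notMem]
  rintro z ⟨⟨u, v, a, hx1, hz1⟩, ⟨p, qq, b, hy1, hz2⟩⟩
  rw [hz1] at hz2
  rcases List.append_eq_append_iff.mp hz2 with ⟨w', hw1, hw2⟩ | ⟨w', hw1, hw2⟩
  · -- p = u ++ w', a :: v = w' ++ b :: qq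
    subst hw1
    cases w' with
    | nil =>
      simp at hw2
      apply hne
      rw [hx1, hy1]
      simp [hw2.1, hw2.2]
    | cons a' w'' =>
      rw [List.cons_append] at hw2
      injection hw2 with ha hv2
      subst ha
      subst hv2
      have hx2 : x = u ++ (w'' ++ b :: qq) := hx1
      have hy2 : y = u ++ a :: (w'' ++ qq) := by rw [hy1, List.append_assoc]; rfl
      have hlen : u.length + w''.length + qq.length + 1 = n := by
        rw [hy2] at hy; simp at hy; omega
      apply hne
      rw [hx2, hy2]
      exact (vt_core u w'' qq a b hlen (by rw [← hx2, ← hy2]; exact hv.symm)).symm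
  · -- u = p ++ w', b :: qq = w' ++ a :: v
    subst hw1
    cases w' with
    | nil =>
      simp at hw2
      apply hne
      rw [hx1, hy1]
      simp [hw2.1, hw2.2]
    | cons b' w'' =>
      rw [List.cons_append] at hw2
      injection hw2 with hb hq2
      subst hb
      subst hq2
      have hy2 : y = p ++ (w'' ++ a :: v) := hy1
      have hx2 : x = p ++ b :: (w'' ++ v) := by rw [hx1, List.append_assoc]; rfl
      have hlen : p.length + w''.length + v.length + 1 = n := by
        rw [hx2] at hx; simp at hx; omega
      apply hne
      rw [hx2, hy2]
      exact vt_core p w'' v b a hlen (by rw [← hx2, ← hy2]; exact hv)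

lemma BS_disj {n : ℕ} {x y : List Bool} (hx : x ∈ balanced n) (hy : y ∈ balanced n)
    (hv : vtSum x ≡ vtSum y [MOD n + 1]) (hne : x ≠ y) : BS x ∩ BS y = ∅ := by
  obtain ⟨hlx, hcx⟩ := hx
  obtain ⟨hly, hcy⟩ := hy
  rw [Set.eq_empty_iff_forall_notMem]
  rintro z ⟨⟨hl1, hd1⟩, ⟨hl2, hd2⟩⟩
  have htri : hammingDist x y ≤ hammingDist x z + hammingDist z y := by
    refine hd_triangle _ _ _ hl1.symm ?_
    rw [hl1, hlx, hly]
  rw [hd_symm z y] at htri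
  have h2 : hammingDist x y ≤ 2 := by omega
  have h1 : 1 ≤ hammingDist x y := hd_pos_of_ne (by rw [hlx, hly]) hne
  interval_cases hxy : (hammingDist x y)
  · -- distance 1 : impossible for equal weights
    obtain ⟨p, c, s, hx1, hy1⟩ := hd_one_struct (by rw [hlx, hly]) hxy
    rw [hx1] at hcx
    rw [hy1] at hcy
    cases c <;> simp [List.count_append, List.count_cons] at hcx hcy <;> omega
  · -- distance 2
    obtain ⟨p, c, q, d, s, hx1, hy1⟩ := hd_two_struct (by rw [hlx, hly]) hxy
    have hcx' := hcx
    have hcy' := hcy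
    rw [hx1] at hcx'
    rw [hy1] at hcy'
    have hlen : p.length + q.length + s.length + 2 = n := by
      rw [hx1] at hlx; simp at hlx; omega
    cases c <;> cases d <;>
      simp [List.count_append, List.count_cons] at hcx' hcy'
    · -- c = false, d = false : weight contradiction
      omega
    · -- c = false, d = true
      have key : vtSum x + 0 = vtSum y + (q.length + 1) := by
        rw [hx1, hy1]
        simp [vtSum_append, vtSum_cons, List.count_append, List.count_cons]
        ring
      have hc : (0 : ℕ) ≡ q.length + 1 [MOD n + 1] := modeq_shift hv key
      have := hc.eq_of_lt_of_lt (by omega) (by omega)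
      omega
    · -- c = true, d = false
      have key : vtSum x + (q.length + 1) = vtSum y + 0 := by
        rw [hx1, hy1]
        simp [vtSum_append, vtSum_cons, List.count_append, List.count_cons]
        ring
      have hc : q.length + 1 ≡ 0 [MOD n + 1] := modeq_shift hv key
      have := hc.eq_of_lt_of_lt (by omega) (by omega)
      omega
    · -- c = true, d = true : weight contradiction
      omega

lemma BVT_pair {n : ℕ} (hn : 2 ≤ n) {x y : List Bool}
    (hx : x ∈ balanced n) (hy : y ∈ balanced n)
    (hv : vtSum x ≡ vtSum y [MOD n + 1]) (hne : x ≠ y)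
    {B : List Bool → Set (List Bool)} (hB : B = BSD ∨ B = BSI) :
    B x ∩ B y = ∅ := by
  have hlx : x.length = n := hx.1
  have hly : y.length = n := hy.1
  have hbs : BS x ∩ BS y = ∅ := BS_disj hx hy hv hne
  rcases hB with rfl | rfl
  · rw [Set.eq_empty_iff_forall_notMem]
    rintro z ⟨hz1, hz2⟩
    rcases hz1 with hS1 | hD1 <;> rcases hz2 with hS2 | hD2
    · exact Set.eq_empty_iff_forall_notMem.mp hbs z ⟨hS1, hS2⟩
    · have := mem_BD_length hD2
      have := hS1.1
      omega
    · have := mem_BD_length hD1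
      have := hS2.1
      omega
    · exact Set.eq_empty_iff_forall_notMem.mp (BD_disj hlx hly hv hne) z ⟨hD1, hD2⟩
  · rw [Set.eq_empty_iff_forall_notMem]
    rintro z ⟨hz1, hz2⟩
    rcases hz1 with hS1 | hI1 <;> rcases hz2 with hS2 | hI2
    · exact Set.eq_empty_iff_forall_notMem.mp hbs z ⟨hS1, hS2⟩
    · have := mem_BI_length hI2
      have := hS1.1
      omega
    · have := mem_BI_length hI1
      have := hS2.1
      omega
    · exact Set.eq_empty_iff_forall_notMem.mp (BI_disj hlx hly hv hne) z ⟨hI1, hI2⟩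

end Aux5
section Aux6
open Real

lemma centralBinom_one' : Nat.centralBinom 1 = 2 := by decide

lemma cb_upper : ∀ k : ℕ, 1 ≤ k →
    (Nat.centralBinom k : ℝ) * Real.sqrt (2 * (k : ℝ) + 1) ≤ 4 ^ k := by
  intro k hk
  induction k with
  | zero => omega
  | succ m ih =>
    rcases Nat.eq_or_lt_of_le hk with h1 | h1
    · -- m + 1 = 1
      have hm : m = 0 := by omega
      subst hm
      rw [centralBinom_one']
      have h4 : Real.sqrt 4 = 2 := by
        rw [show (4:ℝ) = 2 ^ 2 by norm_num]
        exact Real.sqrt_sq (by norm_num)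
      have h3 : Real.sqrt 3 ≤ 2 := by
        have := Real.sqrt_le_sqrt (show (3:ℝ) ≤ 4 by norm_num)
        linarith
      have harg : 2 * ((1 : ℕ) : ℝ) + 1 = 3 := by norm_num
      rw [harg]
      push_cast
      nlinarith
    · have hm : 1 ≤ m := by omega
      have IH := ih hm
      set C : ℝ := (Nat.centralBinom m : ℝ) with hC
      set C' : ℝ := (Nat.centralBinom (m + 1) : ℝ) with hC'
      have hCpos : 0 ≤ C := by positivity
      have hid : ((m : ℝ) + 1) * C' = 2 * (2 * m + 1) * C := by
        have := Nat.succ_mul_centralBinom_succ m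
        have h2 : (((m + 1) * Nat.centralBinom (m + 1) : ℕ) : ℝ) =
            ((2 * (2 * m + 1) * Nat.centralBinom m : ℕ) : ℝ) := by rw [this]
        push_cast at h2
        linarith
      have hs : (0:ℝ) ≤ 2 * m + 1 := by positivity
      have ht : (0:ℝ) ≤ 2 * m + 3 := by positivity
      set s : ℝ := Real.sqrt (2 * m + 1) with hsdef
      set t : ℝ := Real.sqrt (2 * m + 3) with htdef
      have hs0 : 0 ≤ s := Real.sqrt_nonneg _
      have ht0 : 0 ≤ t := Real.sqrt_nonneg _
      have key : (2 * (m:ℝ) + 1) * t ≤ 2 * ((m:ℝ) + 1) * s := by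
        have e1 : (2 * (m:ℝ) + 1) * t = Real.sqrt ((2 * m + 1) ^ 2 * (2 * m + 3)) := by
          rw [Real.sqrt_mul (by positivity), Real.sqrt_sq (by positivity)]
        have e2 : 2 * ((m:ℝ) + 1) * s = Real.sqrt ((2 * ((m:ℝ) + 1)) ^ 2 * (2 * m + 1)) := by
          rw [Real.sqrt_mul (by positivity), Real.sqrt_sq (by positivity)]
        rw [e1, e2]
        apply Real.sqrt_le_sqrt
        nlinarith
      have hfin : C' * t * ((m:ℝ) + 1) ≤ 4 ^ (m + 1) * ((m:ℝ) + 1) := by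
        calc C' * t * ((m:ℝ) + 1) = (((m:ℝ) + 1) * C') * t := by ring
          _ = (2 * (2 * (m:ℝ) + 1) * C) * t := by rw [hid]
          _ = (2 * C) * ((2 * (m:ℝ) + 1) * t) := by ring
          _ ≤ (2 * C) * (2 * ((m:ℝ) + 1) * s) := by
              apply mul_le_mul_of_nonneg_left key (by positivity)
          _ = (4 * ((m:ℝ) + 1)) * (C * s) := by ring
          _ ≤ (4 * ((m:ℝ) + 1)) * 4 ^ m := by
              apply mul_le_mul_of_nonneg_left _ (by positivity)
              convert IH using 2
          _ = 4 ^ (m + 1) * ((m:ℝ) + 1) := by ring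
      have hpos : (0:ℝ) < (m:ℝ) + 1 := by positivity
      have := le_of_mul_le_mul_right hfin hpos
      have harg : 2 * ((m + 1 : ℕ) : ℝ) + 1 = 2 * (m:ℝ) + 3 := by push_cast; ring
      rw [harg]
      exact this

lemma cb_lower : ∀ k : ℕ, 1 ≤ k →
    (4 : ℝ) ^ k ≤ (Nat.centralBinom k : ℝ) * (2 * Real.sqrt (k : ℝ)) := by
  intro k hk
  induction k with
  | zero => omega
  | succ m ih =>
    rcases Nat.eq_or_lt_of_le hk with h1 | h1
    · have hm : m = 0 := by omega
      subst hm
      rw [centralBinom_one']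
      push_cast
      rw [Real.sqrt_one]
      norm_num
    · have hm : 1 ≤ m := by omega
      have IH := ih hm
      set C : ℝ := (Nat.centralBinom m : ℝ) with hC
      set C' : ℝ := (Nat.centralBinom (m + 1) : ℝ) with hC'
      have hCpos : 0 ≤ C := by positivity
      have hid : ((m : ℝ) + 1) * C' = 2 * (2 * m + 1) * C := by
        have := Nat.succ_mul_centralBinom_succ m
        have h2 : (((m + 1) * Nat.centralBinom (m + 1) : ℕ) : ℝ) =
            ((2 * (2 * m + 1) * Nat.centralBinom m : ℕ) : ℝ) := by rw [this]
        push_cast at h2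
        linarith
      set s : ℝ := Real.sqrt (m : ℝ) with hsdef
      set t : ℝ := Real.sqrt ((m : ℝ) + 1) with htdef
      have hs0 : 0 ≤ s := Real.sqrt_nonneg _
      have ht0 : 0 ≤ t := Real.sqrt_nonneg _
      have key : 2 * ((m:ℝ) + 1) * s ≤ (2 * (m:ℝ) + 1) * t := by
        have e1 : 2 * ((m:ℝ) + 1) * s = Real.sqrt ((2 * ((m:ℝ) + 1)) ^ 2 * m) := by
          rw [Real.sqrt_mul (by positivity), Real.sqrt_sq (by positivity)]
        have e2 : (2 * (m:ℝ) + 1) * t = Real.sqrt ((2 * (m:ℝ) + 1) ^ 2 * ((m:ℝ) + 1)) := by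
          rw [Real.sqrt_mul (by positivity), Real.sqrt_sq (by positivity)]
        rw [e1, e2]
        apply Real.sqrt_le_sqrt
        nlinarith
      have hfin : 4 ^ (m + 1) * ((m:ℝ) + 1) ≤ C' * (2 * t) * ((m:ℝ) + 1) := by
        calc (4:ℝ) ^ (m + 1) * ((m:ℝ) + 1) = (4 * ((m:ℝ) + 1)) * 4 ^ m := by ring
          _ ≤ (4 * ((m:ℝ) + 1)) * (C * (2 * s)) := by
              apply mul_le_mul_of_nonneg_left _ (by positivity)
              convert IH using 2
          _ = (4 * C) * (2 * ((m:ℝ) + 1) * s) := by ring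
          _ ≤ (4 * C) * ((2 * (m:ℝ) + 1) * t) := by
              apply mul_le_mul_of_nonneg_left key (by positivity)
          _ = (2 * (2 * (m:ℝ) + 1) * C) * (2 * t) := by ring
          _ = (((m:ℝ) + 1) * C') * (2 * t) := by rw [hid]
          _ = C' * (2 * t) * ((m:ℝ) + 1) := by ring
      have hpos : (0:ℝ) < (m:ℝ) + 1 := by positivity
      have := le_of_mul_le_mul_right hfin hpos
      have harg : ((m + 1 : ℕ) : ℝ) = (m:ℝ) + 1 := by push_cast; ring
      rw [harg]
      exact this

lemma logb2_sqrt {x : ℝ} (hx : 0 ≤ x) :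
    Real.logb 2 (Real.sqrt x) = Real.logb 2 x / 2 := by
  rw [Real.logb, Real.logb, Real.log_sqrt hx]
  ring

lemma logb2_two : Real.logb 2 (2 : ℝ) = 1 := Real.logb_self_eq_one (by norm_num)

lemma logb2_four : Real.logb 2 (4 : ℝ) = 2 := by
  rw [show (4:ℝ) = 2 ^ 2 by norm_num, Real.logb_pow, logb2_two]
  norm_num

lemma logb2_4pow (k : ℕ) : Real.logb 2 ((4 : ℝ) ^ k) = 2 * k := by
  rw [Real.logb_pow, logb2_four]
  ring

end Aux6
section Main
open List

lemma B_finite {B : List Bool → Set (List Bool)} (hB : B = BSD ∨ B = BSI)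
    (w : List Bool) : (B w).Finite := by
  have hS : (BS w).Finite := by
    apply Set.Finite.subset (wordsF w.length).finite_toSet
    intro z hz
    exact Finset.mem_coe.mpr (mem_wordsF.mpr hz.1)
  have hD : (BD w).Finite := by
    apply Set.Finite.subset (wordsF (w.length - 1)).finite_toSet
    intro z hz
    have := mem_BD_length hz
    exact Finset.mem_coe.mpr (mem_wordsF.mpr (by omega))
  have hI : (BI w).Finite := by
    apply Set.Finite.subset (wordsF (w.length + 1)).finite_toSet
    intro z hz
    have := mem_BI_length hz
    exact Finset.mem_coe.mpr (mem_wordsF.mpr (by omega))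
  rcases hB with rfl | rfl
  · exact hS.union hD
  · exact hS.union hI

lemma lower_elem {n N : ℕ} {B : List Bool → Set (List Bool)} (hB : B = BSD ∨ B = BSI)
    (hn : 4 ≤ n) (heven : Even n) (hN : N = 1 ∨ N = 2) :
    ∀ r ∈ {r : ℝ | ∃ C : Set (List Bool),
      reconCode n N B C ∧ r = (n : ℝ) - Real.logb 2 (C.ncard : ℝ)},
      (3 / 2) * Real.logb 2 (n : ℝ) + (-2 : ℝ) ≤ r := by
  rintro r ⟨C, ⟨hsub, hrec⟩, rfl⟩
  obtain ⟨k, hkk⟩ := heven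
  have hk2 : n = 2 * k := by omega
  have hk1 : 1 ≤ k := by omega
  have hn2 : n / 2 = k := by omega
  -- C is finite
  have hCsub : C ⊆ ↑(WF n (n / 2)) := by
    intro x hx
    obtain ⟨h1, h2⟩ := hsub hx
    exact Finset.mem_coe.mpr (mem_WF.mpr ⟨h1, h2⟩)
  have hfin : C.Finite := Set.Finite.subset (WF n (n / 2)).finite_toSet hCsub
  set F := hfin.toFinset with hF
  have hFW : ∀ x ∈ F, x ∈ WF n (n / 2) := by
    intro x hx
    exact Finset.mem_coe.mp (hCsub ((Set.Finite.mem_toFinset hfin).mp hx))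
  have hBSsub : ∀ w, BS w ⊆ B w := by
    rcases hB with rfl | rfl <;> exact fun w => Set.subset_union_left
  have hNle : N ≤ 2 := by omega
  -- minimum distance 3
  have hdist : ∀ x ∈ F, ∀ y ∈ F, hammingDist x y ≤ 2 → x = y := by
    intro x hx y hy hd2
    by_contra hne
    have hxC : x ∈ C := (Set.Finite.mem_toFinset hfin).mp hx
    have hyC : y ∈ C := (Set.Finite.mem_toFinset hfin).mp hy
    have hlx : x.length = n := (mem_WF.mp (hFW x hx)).1
    have hly : y.length = n := (mem_WF.mp (hFW y hy)).1
    have h1 : 1 ≤ hammingDist x y := hd_pos_of_ne (by rw [hlx, hly]) hne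
    obtain ⟨z1, z2, hz12, hl1, hl2, ha1, hb1, ha2, hb2⟩ :=
      two_common (by rw [hlx, hly] : x.length = y.length) h1 hd2
    have hz1 : z1 ∈ B x ∩ B y :=
      ⟨hBSsub x ⟨hl1, ha1⟩, hBSsub y ⟨by rw [hl1, hlx, hly], hb1⟩⟩
    have hz2 : z2 ∈ B x ∩ B y :=
      ⟨hBSsub x ⟨hl2, ha2⟩, hBSsub y ⟨by rw [hl2, hlx, hly], hb2⟩⟩
    have hfininter : (B x ∩ B y).Finite :=
      Set.Finite.subset (B_finite hB x) Set.inter_subset_left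
    have hlt : 1 < (B x ∩ B y).ncard :=
      (Set.one_lt_ncard hfininter).mpr ⟨z1, hz1, z2, hz2, hz12⟩
    have := hrec x hxC y hyC hne
    omega
  have hpack := packing F hFW hdist
  have hncard : C.ncard = F.card := Set.ncard_eq_toFinset_card C hfin
  -- arithmetic
  have hchoose : n.choose (n / 2) = Nat.centralBinom k := by
    rw [hn2, hk2]
    rfl
  set CB : ℝ := (Nat.centralBinom k : ℝ) with hCB
  have hCBpos : (0 : ℝ) < CB := by
    have := Nat.centralBinom_pos k
    positivity
  have hn1pos : (0 : ℝ) < (n : ℝ) + 1 := by positivity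
  have hcardR : (C.ncard : ℝ) ≤ 3 * CB / ((n : ℝ) + 1) := by
    rw [le_div_iff₀ hn1pos]
    have : (F.card : ℝ) * ((n : ℝ) + 1) ≤ 3 * CB := by
      have h := hpack
      rw [hchoose] at h
      rw [hCB]
      exact_mod_cast h
    rw [hncard]
    exact this
  have hCBge : (n : ℝ) ≤ CB := by
    have h1 : (2 * k).choose 1 ≤ (2 * k).choose ((2 * k) / 2) := Nat.choose_le_middle 1 (2 * k)
    rw [Nat.choose_one_right] at h1
    have h2 : (2 * k) / 2 = k := by omega
    rw [h2] at h1
    have h3 : (2 * k : ℕ) ≤ Nat.centralBinom k := h1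
    rw [hk2, hCB]
    exact_mod_cast h3
  have hM1 : (1 : ℝ) ≤ 3 * CB / ((n : ℝ) + 1) := by
    rw [le_div_iff₀ hn1pos]
    have : (4 : ℝ) ≤ (n : ℝ) := by exact_mod_cast hn
    nlinarith
  have hlogle : Real.logb 2 (C.ncard : ℝ) ≤ Real.logb 2 (3 * CB / ((n : ℝ) + 1)) := by
    rcases Nat.eq_zero_or_pos C.ncard with h0 | h0
    · rw [h0]
      push_cast
      rw [Real.logb_zero]
      exact Real.logb_nonneg (by norm_num) hM1
    · exact Real.logb_le_logb_of_le (by norm_num) (by exact_mod_cast h0) hcardR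
  have hsplit : Real.logb 2 (3 * CB / ((n : ℝ) + 1)) =
      Real.logb 2 3 + Real.logb 2 CB - Real.logb 2 ((n : ℝ) + 1) := by
    rw [Real.logb_div (by positivity) (by positivity),
      Real.logb_mul (by norm_num) (by positivity)]
  have hlog3 : Real.logb 2 (3 : ℝ) ≤ 2 := by
    have := Real.logb_le_logb_of_le (show (1:ℝ) < 2 by norm_num)
      (show (0:ℝ) < 3 by norm_num) (show (3:ℝ) ≤ 4 by norm_num)
    rw [logb2_four] at this
    exact this
  -- upper bound for logb CB
  have hsq : (0 : ℝ) < Real.sqrt (2 * (k : ℝ) + 1) := Real.sqrt_pos.mpr (by positivity)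
  have hCBle : CB ≤ (4 : ℝ) ^ k / Real.sqrt (2 * (k : ℝ) + 1) := by
    rw [le_div_iff₀ hsq]
    exact cb_upper k hk1
  have hlogCB : Real.logb 2 CB ≤ 2 * (k : ℝ) - Real.logb 2 (2 * (k : ℝ) + 1) / 2 := by
    have h1 := Real.logb_le_logb_of_le (show (1:ℝ) < 2 by norm_num) hCBpos hCBle
    rw [Real.logb_div (by positivity) (by positivity), logb2_4pow,
      logb2_sqrt (by positivity)] at h1
    linarith
  have hnk : (n : ℝ) + 1 = 2 * (k : ℝ) + 1 := by
    rw [hk2]; push_cast; ring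
  have hlogmono : Real.logb 2 (n : ℝ) ≤ Real.logb 2 (2 * (k : ℝ) + 1) := by
    apply Real.logb_le_logb_of_le (by norm_num)
    · have : (4 : ℝ) ≤ (n : ℝ) := by exact_mod_cast hn
      linarith
    · rw [← hnk]; linarith
  have hnR : (n : ℝ) = 2 * (k : ℝ) := by rw [hk2]; push_cast; ring
  rw [hnk] at hsplit hlogle
  linarith [hlogle, hsplit, hlog3, hlogCB, hlogmono]

lemma upper_elem {n N : ℕ} {B : List Bool → Set (List Bool)} (hB : B = BSD ∨ B = BSI)
    (hn : 4 ≤ n) (heven : Even n) (hN : N = 1 ∨ N = 2) :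
    ∃ r ∈ {r : ℝ | ∃ C : Set (List Bool),
      reconCode n N B C ∧ r = (n : ℝ) - Real.logb 2 (C.ncard : ℝ)},
      r ≤ (3 / 2) * Real.logb 2 (n : ℝ) + 2 := by
  classical
  obtain ⟨k, hkk⟩ := heven
  have hk2 : n = 2 * k := by omega
  have hk1 : 1 ≤ k := by omega
  have hn2 : n / 2 = k := by omega
  set S0 := WF n (n / 2) with hS0
  have hS0card : S0.card = Nat.centralBinom k := by
    rw [hS0, card_WF, hn2, hk2]
    rfl
  have hfibers : ∀ x ∈ S0, vtSum x % (n + 1) ∈ Finset.range (n + 1) := by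
    intro x hx
    exact Finset.mem_range.mpr (Nat.mod_lt _ (by omega))
  have hsum := Finset.card_eq_sum_card_fiberwise hfibers
  have hexists : ∃ a ∈ Finset.range (n + 1),
      (S0.card : ℝ) / ((n : ℝ) + 1) ≤
        ((S0.filter (fun x => vtSum x % (n + 1) = a)).card : ℝ) := by
    apply Finset.exists_le_of_sum_le ⟨0, Finset.mem_range.mpr (by omega)⟩
    have hleft : ∑ _a ∈ Finset.range (n + 1), (S0.card : ℝ) / ((n : ℝ) + 1) =
        (S0.card : ℝ) := by
      rw [Finset.sum_const, Finset.card_range]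
      rw [nsmul_eq_mul]; push_cast
      field_simp
    have hright : ∑ a ∈ Finset.range (n + 1),
        ((S0.filter (fun x => vtSum x % (n + 1) = a)).card : ℝ) = (S0.card : ℝ) := by
      rw [hsum]
      push_cast
      rfl
    rw [hleft, hright]
  obtain ⟨a, _, hle⟩ := hexists
  set Fb := S0.filter (fun x => vtSum x % (n + 1) = a) with hFb
  have hCBposN := Nat.centralBinom_pos k
  have hfibposR : (0 : ℝ) < (Fb.card : ℝ) := by
    apply lt_of_lt_of_le _ hle
    rw [hS0card]
    positivity
  have hfibpos : 0 < Fb.card := by exact_mod_cast hfibposR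
  -- the code
  set C : Set (List Bool) := ↑Fb with hC
  have hCcard : C.ncard = Fb.card := Set.ncard_coe_finset Fb
  have hrecon : reconCode n N B C := by
    constructor
    · intro x hx
      have := Finset.mem_filter.mp (Finset.mem_coe.mp hx)
      obtain ⟨h1, h2⟩ := mem_WF.mp this.1
      exact ⟨h1, h2⟩
    · intro x hx y hy hne
      have hxm := Finset.mem_filter.mp (Finset.mem_coe.mp hx)
      have hym := Finset.mem_filter.mp (Finset.mem_coe.mp hy)
      have hxb : x ∈ balanced n := by
        obtain ⟨h1, h2⟩ := mem_WF.mp hxm.1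
        exact ⟨h1, h2⟩
      have hyb : y ∈ balanced n := by
        obtain ⟨h1, h2⟩ := mem_WF.mp hym.1
        exact ⟨h1, h2⟩
      have hmod : vtSum x ≡ vtSum y [MOD n + 1] := by
        show vtSum x % (n + 1) = vtSum y % (n + 1)
        rw [hxm.2, hym.2]
      have hempty := BVT_pair (by omega) hxb hyb hmod hne hB
      rw [hempty, Set.ncard_empty]
      omega
  refine ⟨(n : ℝ) - Real.logb 2 (C.ncard : ℝ), ⟨C, hrecon, rfl⟩, ?_⟩
  -- arithmetic
  set CB : ℝ := (Nat.centralBinom k : ℝ) with hCB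
  have hCBpos : (0 : ℝ) < CB := by positivity
  have hn1pos : (0 : ℝ) < (n : ℝ) + 1 := by positivity
  have hargpos : (0 : ℝ) < CB / ((n : ℝ) + 1) := by positivity
  have hloggem : Real.logb 2 (CB / ((n : ℝ) + 1)) ≤ Real.logb 2 (C.ncard : ℝ) := by
    apply Real.logb_le_logb_of_le (by norm_num) hargpos
    rw [hCcard]
    rw [div_le_iff₀ hn1pos] at hle ⊢
    rw [hS0card] at hle
    exact hle
  have hsq : (0 : ℝ) < Real.sqrt (k : ℝ) := Real.sqrt_pos.mpr (by positivity)
  have hCBge : (4 : ℝ) ^ k / (2 * Real.sqrt (k : ℝ)) ≤ CB := by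
    rw [div_le_iff₀ (by positivity)]
    exact cb_lower k hk1
  have hlogCB : 2 * (k : ℝ) - 1 - Real.logb 2 (k : ℝ) / 2 ≤ Real.logb 2 CB := by
    have h1 := Real.logb_le_logb_of_le (show (1:ℝ) < 2 by norm_num)
      (show (0:ℝ) < (4 : ℝ) ^ k / (2 * Real.sqrt (k : ℝ)) by positivity) hCBge
    rw [Real.logb_div (by positivity) (by positivity), logb2_4pow,
      Real.logb_mul (by norm_num) (by positivity), logb2_two,
      logb2_sqrt (by positivity)] at h1
    linarith
  have hsplit : Real.logb 2 (CB / ((n : ℝ) + 1)) =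
      Real.logb 2 CB - Real.logb 2 ((n : ℝ) + 1) := by
    rw [Real.logb_div (by positivity) (by positivity)]
  have hn4R : (4 : ℝ) ≤ (n : ℝ) := by exact_mod_cast hn
  have hnpos : (0 : ℝ) < (n : ℝ) := by linarith
  have hlogn1 : Real.logb 2 ((n : ℝ) + 1) ≤ 1 + Real.logb 2 (n : ℝ) := by
    have h1 : Real.logb 2 ((n : ℝ) + 1) ≤ Real.logb 2 (2 * (n : ℝ)) := by
      apply Real.logb_le_logb_of_le (by norm_num) (by positivity)
      linarith
    rw [Real.logb_mul (by norm_num) (by positivity), logb2_two] at h1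
    exact h1
  have hlogk : Real.logb 2 (k : ℝ) = Real.logb 2 (n : ℝ) - 1 := by
    have hkR : (k : ℝ) = (n : ℝ) / 2 := by rw [hk2]; push_cast; ring
    rw [hkR, Real.logb_div (by positivity) (by norm_num), logb2_two]
  have hnR : (n : ℝ) = 2 * (k : ℝ) := by rw [hk2]; push_cast; ring
  linarith [hloggem, hlogCB, hsplit, hlogn1]

end Main
/-- Theorem: for `B ∈ {B^SD, B^SI}` and `N ∈ {1,2}`, `ρ_b(n,N;B) = (3/2)·log₂ n + Θ(1)`. -/
theorem stmt4 :
    ∀ B ∈ ({BSD, BSI} : Set (List Bool → Set (List Bool))),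
      ∃ c1 c2 : ℝ, ∃ n0 : ℕ, Even n0 ∧ ∀ n : ℕ, Even n → n0 ≤ n →
        ∀ N : ℕ, N = 1 ∨ N = 2 →
          (3 / 2) * Real.logb 2 (n : ℝ) + c1 ≤ rho n N B ∧
          rho n N B ≤ (3 / 2) * Real.logb 2 (n : ℝ) + c2 := by
  intro B hB
  have hB' : B = BSD ∨ B = BSI := by
    rcases hB with h | h
    · exact Or.inl h
    · exact Or.inr h
  refine ⟨-2, 2, 4, ⟨2, rfl⟩, ?_⟩
  intro n heven hn N hN
  unfold rho
  constructor
  · have hempty : reconCode n N B (∅ : Set (List Bool)) :=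
      ⟨Set.empty_subset _, fun x hx => absurd hx (Set.notMem_empty x)⟩
    have hne : Set.Nonempty {r : ℝ | ∃ C : Set (List Bool),
        reconCode n N B C ∧ r = (n : ℝ) - Real.logb 2 (C.ncard : ℝ)} :=
      ⟨(n : ℝ) - Real.logb 2 ((∅ : Set (List Bool)).ncard : ℝ), ∅, hempty, rfl⟩
    exact le_csInf hne (lower_elem hB' hn heven hN)
  · obtain ⟨r, hrmem, hrle⟩ := upper_elem hB' hn heven hN
    have hbdd : BddBelow {r : ℝ | ∃ C : Set (List Bool),
        reconCode n N B C ∧ r = (n : ℝ) - Real.logb 2 (C.ncard : ℝ)} :=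
      ⟨(3 / 2) * Real.logb 2 (n : ℝ) + (-2 : ℝ),
        fun s hs => lower_elem hB' hn heven hN s hs⟩
    exact le_trans (csInf_le hbdd hrmem) hrle

end BRC
end

section
/- Let n ≥ 4 be even and let A^D(n) denote the maximum size of a code C ⊆ U_n whose single-deletion balls are pairwise disjoint (i.e., |B^D(x) ∩ B^D(y)| = 0 for all distinct x, y ∈ C; equivalently, C is a balanced (n,1;B^D)-reconstruction code). Then A^D(n) ≤ 2·(C(n, n/2) − 2)/(n − 2). -/
namespace BRC

section Stmt8Dev

open Finset

def dsc : List Bool → ℕ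
  | a :: b :: t => (if a && !b then 1 else 0) + dsc (b :: t)
  | _ => 0
def asc : List Bool → ℕ
  | a :: b :: t => (if !a && b then 1 else 0) + asc (b :: t)
  | _ => 0
lemma dsc_cons (a : Bool) (l : List Bool) :
    dsc (a :: l) = (if a = true ∧ l.head? = some false then 1 else 0) + dsc l := by
  cases l with
  | nil => simp [dsc]
  | cons b t => cases a <;> cases b <;> simp [dsc]
lemma asc_cons (a : Bool) (l : List Bool) :
    asc (a :: l) = (if a = false ∧ l.head? = some true then 1 else 0) + asc l := by
  cases l with
  | nil => simp [asc]
  | cons b t => cases a <;> cases b <;> simp [asc]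

lemma dsc_asc_identity (l : List Bool) :
    dsc l + (if l.getLast? = some true then 1 else 0)
      = asc l + (if l.head? = some true then 1 else 0) := by
  induction l with
  | nil => simp [dsc, asc]
  | cons a t ih =>
      cases t with
      | nil => simp [dsc, asc]
      | cons d t'' =>
          rw [List.getLast?_cons_cons, dsc_cons, asc_cons]
          simp only [List.head?_cons] at ih ⊢
          cases a <;> cases d <;> simp at ih ⊢ <;> omega

lemma one_le_asc_add_dsc : ∀ (l : List Bool) (b : Bool), (!b) ∈ l →
    1 ≤ asc (b :: l) + dsc (b :: l) := by
  intro l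
  induction l with
  | nil => intro b h; simp at h
  | cons c z ih =>
      intro b h
      rcases eq_or_ne c b with rfl | hne
      · have hz : (!c) ∈ z := by
          rcases List.mem_cons.1 h with h1 | h2
          · exact absurd h1.symm (by simp)
          · exact h2
        have := ih c hz
        have e1 : asc (c :: c :: z) = asc (c :: z) := by
          rw [asc_cons (a := c) (l := c :: z)]; cases c <;> simp
        have e2 : dsc (c :: c :: z) = dsc (c :: z) := by
          rw [dsc_cons (a := c) (l := c :: z)]; cases c <;> simp
        omega
      · have hc : c = !b := by cases b <;> cases c <;> simp_all
        subst hc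
        cases b <;> simp [asc, dsc] <;> omega

lemma asc_cons_cons_le (c b : Bool) (v : List Bool) : asc (c :: v) ≤ asc (c :: b :: v) := by
  cases v with
  | nil => cases c <;> cases b <;> simp [asc]
  | cons d t => cases c <;> cases b <;> cases d <;> simp [asc] <;> omega

lemma dsc_cons_cons_le (c b : Bool) (v : List Bool) : dsc (c :: v) ≤ dsc (c :: b :: v) := by
  cases v with
  | nil => cases c <;> cases b <;> simp [dsc]
  | cons d t => cases c <;> cases b <;> cases d <;> simp [dsc] <;> omega

lemma asc_deletion (u v : List Bool) (b : Bool) : asc (u ++ v) ≤ asc (u ++ b :: v) := by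
  induction u with
  | nil =>
      simp only [List.nil_append]
      rw [asc_cons]; omega
  | cons c u' ih =>
      cases u' with
      | nil => simpa using asc_cons_cons_le c b v
      | cons d u'' =>
          simp only [List.cons_append] at *
          rw [asc_cons (a := c) (l := d :: (u'' ++ v)), asc_cons (a := c) (l := d :: (u'' ++ b :: v))]
          simp only [List.head?_cons]
          exact Nat.add_le_add (by cases c <;> cases d <;> simp) ih

lemma dsc_deletion (u v : List Bool) (b : Bool) : dsc (u ++ v) ≤ dsc (u ++ b :: v) := by
  induction u with
  | nil =>
      simp only [List.nil_append]
      rw [dsc_cons]; omega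
  | cons c u' ih =>
      cases u' with
      | nil => simpa using dsc_cons_cons_le c b v
      | cons d u'' =>
          simp only [List.cons_append] at *
          rw [dsc_cons (a := c) (l := d :: (u'' ++ v)), dsc_cons (a := c) (l := d :: (u'' ++ b :: v))]
          simp only [List.head?_cons]
          exact Nat.add_le_add (by cases c <;> cases d <;> simp) ih


lemma dsc_le_length (l : List Bool) : dsc l ≤ l.length := by
  induction l with
  | nil => simp [dsc]
  | cons a t ih => rw [dsc_cons]; simp only [List.length_cons]; split <;> omega

def ballFin (x : List Bool) : Finset (List Bool) :=
  (Finset.range x.length).image (fun i => x.eraseIdx i)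

lemma eraseIdx_append_cons (u v : List Bool) (b : Bool) :
    (u ++ b :: v).eraseIdx u.length = u ++ v := by
  induction u with
  | nil => simp
  | cons c u' ih => simpa using ih

lemma exists_decomp (x : List Bool) (i : ℕ) (hi : i < x.length) :
    ∃ (u v : List Bool) (b : Bool), x = u ++ b :: v ∧ x.eraseIdx i = u ++ v := by
  refine ⟨x.take i, x.drop (i+1), x[i], ?_, ?_⟩
  · conv_lhs => rw [← List.take_append_drop i x, List.drop_eq_getElem_cons hi]
  · exact List.eraseIdx_eq_take_drop_succ x i

lemma mem_BD_iff (x y : List Bool) : y ∈ BD x ↔ y ∈ ballFin x := by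
  constructor
  · rintro ⟨u, v, b, rfl, rfl⟩
    refine Finset.mem_image.2 ⟨u.length, Finset.mem_range.2 (by simp), ?_⟩
    exact eraseIdx_append_cons u v b
  · intro hy
    obtain ⟨i, hi, rfl⟩ := Finset.mem_image.1 hy
    obtain ⟨u, v, b, hx, he⟩ := exists_decomp x i (Finset.mem_range.1 hi)
    exact ⟨u, v, b, hx, he⟩

lemma BD_eq_ballFin (x : List Bool) : BD x = ↑(ballFin x) := by
  ext y; simpa using mem_BD_iff x y

lemma ballFin_cons (a : Bool) (t : List Bool) :
    ballFin (a :: t) = insert t ((ballFin t).image (a :: ·)) := by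
  ext y
  simp only [ballFin, Finset.mem_image, Finset.mem_range, Finset.mem_insert, List.length_cons]
  constructor
  · rintro ⟨i, hi, rfl⟩
    cases i with
    | zero => left; simp
    | succ j => right; exact ⟨t.eraseIdx j, ⟨j, by omega, rfl⟩, by simp⟩
  · rintro (rfl | ⟨w, ⟨j, hj, rfl⟩, rfl⟩)
    · exact ⟨0, by omega, by simp⟩
    · exact ⟨j + 1, by omega, by simp⟩

lemma card_ballFin (x : List Bool) (hx : x ≠ []) :
    asc x + dsc x + 1 ≤ (ballFin x).card := by
  induction x with
  | nil => simp at hx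
  | cons a t ih =>
      cases t with
      | nil =>
          simp [ballFin, asc, dsc]
      | cons d t'' =>
          rw [ballFin_cons]
          have hinj : Function.Injective (a :: · : List Bool → List Bool) :=
            fun w w' h => by simpa using h
          have ihc := ih (by simp)
          have himg : (ballFin (d :: t'')).card
              = ((ballFin (d :: t'')).image (a :: ·)).card :=
            (Finset.card_image_of_injective _ hinj).symm
          rw [asc_cons, dsc_cons]
          simp only [List.head?_cons]
          rcases eq_or_ne d a with rfl | hne
          · have hle := Finset.card_le_card
              (Finset.subset_insert (d :: t'') ((ballFin (d :: t'')).image (d :: ·)))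
            cases d <;> simp <;> omega
          · have hnotmem : (d :: t'') ∉ (ballFin (d :: t'')).image (a :: ·) := by
              intro hmem
              obtain ⟨w, _, hw⟩ := Finset.mem_image.1 hmem
              exact hne (by simpa using congrArg List.head? hw.symm) |>.elim
            rw [Finset.card_insert_of_notMem hnotmem]
            cases a <;> cases d <;> simp_all <;> omega

def mst (l : List Bool) : ℕ := if l.head? = some true then dsc l else asc l

lemma mst_cons (c : Bool) (l : List Bool) :
    mst (c :: l) = if c = true then dsc (c :: l) else asc (c :: l) := by
  cases c <;> simp [mst]

lemma mst_deletion (u v : List Bool) (b : Bool) : mst (u ++ v) ≤ mst (u ++ b :: v) := by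
  cases u with
  | nil =>
      cases v with
      | nil => simp [mst, asc, dsc]
      | cons c v' =>
          simp only [List.nil_append]
          rcases eq_or_ne b c with rfl | hne
          · cases b
            · have e2 : mst (false :: v') = asc (false :: v') := by simp [mst]
              have e3 : mst (false :: false :: v') = asc (false :: false :: v') := by
                simp [mst]
              rw [e2, e3]; exact asc_cons_cons_le false false v'
            · have e2 : mst (true :: v') = dsc (true :: v') := by simp [mst]
              have e3 : mst (true :: true :: v') = dsc (true :: true :: v') := by
                simp [mst]
              rw [e2, e3]; exact dsc_cons_cons_le true true v'
          · cases b
            · -- b = false, c = true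
              have hc : c = true := by cases c <;> simp_all
              subst hc
              have e2 : mst (true :: v') = dsc (true :: v') := by simp [mst]
              have e3 : mst (false :: true :: v') = asc (false :: true :: v') := by
                simp [mst]
              rw [e2, e3]
              have hid := dsc_asc_identity (true :: v')
              rw [if_pos (by simp : (true :: v').head? = some true)] at hid
              have hB : (if (true :: v').getLast? = some true then 1 else 0) ≤ 1 := by
                split <;> omega
              have he : asc (false :: true :: v') = 1 + asc (true :: v') := by
                rw [asc_cons]; simp
              omega
            · -- b = true, c = false
              have hc : c = false := by cases c <;> simp_all
              subst hc
              have e2 : mst (false :: v') = asc (false :: v') := by simp [mst]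
              have e3 : mst (true :: false :: v') = dsc (true :: false :: v') := by
                simp [mst]
              rw [e2, e3]
              have hid := dsc_asc_identity (false :: v')
              rw [if_neg (by simp : ¬ ((false :: v').head? = some true))] at hid
              have hB : (if (false :: v').getLast? = some true then 1 else 0) ≤ 1 := by
                split <;> omega
              have he : dsc (true :: false :: v') = 1 + dsc (false :: v') := by
                rw [dsc_cons]; simp
              omega
  | cons c u' =>
      rw [List.cons_append, List.cons_append, mst_cons, mst_cons]
      cases c
      · simp only [Bool.false_eq_true, if_false]
        have := asc_deletion (false :: u') v b
        simpa using this
      · simp only [if_pos rfl]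
        have := dsc_deletion (true :: u') v b
        simpa using this

lemma two_mul_mst_le (x : List Bool) (hx : x ≠ []) (ht : true ∈ x) (hf : false ∈ x) :
    2 * max (mst x) 1 ≤ asc x + dsc x + 1 := by
  have hmix : 1 ≤ asc x + dsc x := by
    cases x with
    | nil => simp at hx
    | cons a z =>
        apply one_le_asc_add_dsc z a
        cases a
        · simpa using List.mem_cons.1 ht |>.resolve_left (by simp)
        · simpa using List.mem_cons.1 hf |>.resolve_left (by simp)
  have hid := dsc_asc_identity x
  have hB : (if x.getLast? = some true then 1 else 0) ≤ 1 := by split <;> omega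
  have hm : 2 * mst x ≤ asc x + dsc x + 1 := by
    unfold mst
    split
    · rename_i h; rw [if_pos h] at hid; omega
    · rename_i h; rw [if_neg h] at hid; omega
  omega

noncomputable def wfun (y : List Bool) : ℝ := ((2 * max (mst y) 1 : ℕ) : ℝ)⁻¹

lemma wfun_nonneg (y : List Bool) : 0 ≤ wfun y := by
  unfold wfun; positivity

lemma ball_weight_ge_one (x : List Bool) (hx : x ≠ []) (ht : true ∈ x) (hf : false ∈ x) :
    1 ≤ ∑ y ∈ ballFin x, wfun y := by
  have hcard := card_ballFin x hx
  have h2m := two_mul_mst_le x hx ht hf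
  have hposx : (0:ℝ) < ((2 * max (mst x) 1 : ℕ) : ℝ) := by
    have : 0 < 2 * max (mst x) 1 := by positivity
    exact_mod_cast this
  have key : ∀ y ∈ ballFin x, wfun x ≤ wfun y := by
    intro y hy
    obtain ⟨u, v, b, hxe, hye⟩ := (mem_BD_iff x y).2 hy
    have hmle : mst y ≤ mst x := by
      subst hxe; subst hye; exact mst_deletion u v b
    unfold wfun
    apply inv_anti₀
    · have : 0 < 2 * max (mst y) 1 := by positivity
      exact_mod_cast this
    · have : 2 * max (mst y) 1 ≤ 2 * max (mst x) 1 := by omega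
      exact_mod_cast this
  calc (1:ℝ) = ((2 * max (mst x) 1 : ℕ) : ℝ) * wfun x := by
        unfold wfun; field_simp
    _ ≤ ((ballFin x).card : ℝ) * wfun x := by
        apply mul_le_mul_of_nonneg_right _ (wfun_nonneg x)
        exact_mod_cast le_trans h2m hcard
    _ = ∑ y ∈ ballFin x, wfun x := by rw [Finset.sum_const, nsmul_eq_mul]
    _ ≤ ∑ y ∈ ballFin x, wfun y := Finset.sum_le_sum key

def allWords : ℕ → Finset (List Bool)
  | 0 => {[]}
  | n+1 => ((allWords n).image (true :: ·)) ∪ ((allWords n).image (false :: ·))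

lemma mem_allWords (l : List Bool) (n : ℕ) : l ∈ allWords n ↔ l.length = n := by
  induction n generalizing l with
  | zero => simp [allWords, List.length_eq_zero_iff]
  | succ m ih =>
      simp only [allWords, Finset.mem_union, Finset.mem_image]
      constructor
      · rintro (⟨z, hz, rfl⟩ | ⟨z, hz, rfl⟩) <;> simp [ih z |>.1 hz]
      · intro hl
        cases l with
        | nil => simp at hl
        | cons a z =>
            have hz : z ∈ allWords m := (ih z).2 (by simpa using hl)
            cases a
            · exact Or.inr ⟨z, hz, rfl⟩
            · exact Or.inl ⟨z, hz, rfl⟩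

def cls1 (t s q : ℕ) : Finset (List Bool) :=
  (allWords (t+s)).filter (fun y => y.count true = t ∧ y.head? = some true ∧ dsc y = q)
def cls2 (t s q : ℕ) : Finset (List Bool) :=
  (allWords (t+s)).filter (fun y => y.count true = t ∧ y.head? = some false ∧ dsc y = q)

lemma dsc_pos_of_head_true (y : List Bool) (hh : y.head? = some true) (hf : false ∈ y) :
    1 ≤ dsc y := by
  by_contra h
  have hd : dsc y = 0 := by omega
  have hid := dsc_asc_identity y
  rw [hd, if_pos hh] at hid
  have hB : (if y.getLast? = some true then 1 else 0) ≤ 1 := by split <;> omega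
  have ha : asc y = 0 := by omega
  cases y with
  | nil => simp at hh
  | cons a z =>
      have ha' : a = true := by simpa using hh
      subst ha'
      have : (!true) ∈ z := by
        simpa using List.mem_cons.1 hf |>.resolve_left (by simp)
      have := one_le_asc_add_dsc z true this
      omega

lemma count_true_add_count_false (l : List Bool) :
    l.count true + l.count false = l.length := by
  induction l with
  | nil => simp
  | cons a z ih => cases a <;> simp [List.count_cons] <;> omega

lemma cls1_empty_q0 (t s : ℕ) (hs : 1 ≤ s) : cls1 t s 0 = ∅ := by
  rw [Finset.eq_empty_iff_forall_notMem]
  intro y hy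
  simp only [cls1, Finset.mem_filter, mem_allWords] at hy
  obtain ⟨hlen, hcnt, hhd, hdsc⟩ := hy
  have hcf : y.count false ≥ 1 := by
    have := count_true_add_count_false y
    omega
  have hf : false ∈ y := by
    have := List.count_pos_iff.1 (by omega : 0 < y.count false)
    exact this
  have := dsc_pos_of_head_true y hhd hf
  omega

lemma cls1_decomp (t s q : ℕ) (ht : 1 ≤ t) (hs : 1 ≤ s) (hq : 1 ≤ q) :
    cls1 t s q = ((cls1 (t-1) s q) ∪ (cls2 (t-1) s (q-1))).image (true :: ·) := by
  ext y
  simp only [Finset.mem_image, Finset.mem_union, cls1, cls2, Finset.mem_filter, mem_allWords]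
  constructor
  · rintro ⟨hlen, hcnt, hhd, hdsc⟩
    cases y with
    | nil => simp at hhd
    | cons a z =>
        have ha : a = true := by simpa using hhd
        subst ha
        refine ⟨z, ?_, rfl⟩
        have hlz : z.length = (t-1) + s := by
          simp only [List.length_cons] at hlen; omega
        have hcz : z.count true = t - 1 := by
          simp only [List.count_cons, if_pos rfl] at hcnt
          simp at hcnt; omega
        cases hz : z.head? with
        | none =>
            exfalso
            have : z = [] := List.head?_eq_none_iff.1 hz
            subst this; simp at hlz; omega
        | some c =>
            have hd := dsc_cons true z
            cases c
            · right
              refine ⟨hlz, hcz, by simp [hz], ?_⟩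
              rw [hz] at hd; simp at hd
              omega
            · left
              refine ⟨hlz, hcz, by simp [hz], ?_⟩
              rw [hz] at hd; simp at hd
              omega
  · rintro ⟨z, (⟨hl, hc, hh, hd⟩ | ⟨hl, hc, hh, hd⟩), rfl⟩
    · refine ⟨by simp [hl]; omega, by simp [List.count_cons, hc]; omega, by simp, ?_⟩
      rw [dsc_cons, hh]; simp; omega
    · refine ⟨by simp [hl]; omega, by simp [List.count_cons, hc]; omega, by simp, ?_⟩
      rw [dsc_cons, hh]; simp; omega

lemma cls2_decomp (t s q : ℕ) (hs : 1 ≤ s) (hts : 2 ≤ t + s) :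
    cls2 t s q = ((cls2 t (s-1) q) ∪ (cls1 t (s-1) q)).image (false :: ·) := by
  ext y
  simp only [Finset.mem_image, Finset.mem_union, cls1, cls2, Finset.mem_filter, mem_allWords]
  constructor
  · rintro ⟨hlen, hcnt, hhd, hdsc⟩
    cases y with
    | nil => simp at hhd
    | cons a z =>
        have ha : a = false := by simpa using hhd
        subst ha
        refine ⟨z, ?_, rfl⟩
        have hlz : z.length = t + (s-1) := by
          simp only [List.length_cons] at hlen; omega
        have hcz : z.count true = t := by
          simp only [List.count_cons] at hcnt
          simp at hcnt; omega
        have hd := dsc_cons false z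
        simp at hd
        cases hz : z.head? with
        | none =>
            exfalso
            have : z = [] := List.head?_eq_none_iff.1 hz
            subst this; simp at hlz; omega
        | some c =>
            cases c
            · left; exact ⟨hlz, hcz, by simp [hz], by omega⟩
            · right; exact ⟨hlz, hcz, by simp [hz], by omega⟩
  · rintro ⟨z, (⟨hl, hc, hh, hd⟩ | ⟨hl, hc, hh, hd⟩), rfl⟩
    · refine ⟨by simp [hl]; omega, by simp [List.count_cons, hc], by simp, ?_⟩
      rw [dsc_cons]; simp; omega
    · refine ⟨by simp [hl]; omega, by simp [List.count_cons, hc], by simp, ?_⟩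
      rw [dsc_cons]; simp; omega


lemma cons_inj (b : Bool) : Function.Injective (b :: · : List Bool → List Bool) :=
  fun w w' h => by simpa using h

lemma cls_disjoint (t s q t' s' q' : ℕ) : Disjoint (cls1 t s q) (cls2 t' s' q') := by
  rw [Finset.disjoint_left]
  intro y hy1 hy2
  simp only [cls1, cls2, Finset.mem_filter] at hy1 hy2
  have h1 := hy1.2.2.1
  have h2 := hy2.2.2.1
  rw [h1] at h2; simp at h2

lemma card_cls1_rec (t s q : ℕ) (ht : 1 ≤ t) (hs : 1 ≤ s) (hq : 1 ≤ q) :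
    (cls1 t s q).card = (cls1 (t-1) s q).card + (cls2 (t-1) s (q-1)).card := by
  rw [cls1_decomp t s q ht hs hq,
    Finset.card_image_of_injective _ (cons_inj true),
    Finset.card_union_of_disjoint (cls_disjoint _ _ _ _ _ _)]

lemma card_cls2_rec (t s q : ℕ) (hs : 1 ≤ s) (hts : 2 ≤ t + s) :
    (cls2 t s q).card = (cls2 t (s-1) q).card + (cls1 t (s-1) q).card := by
  rw [cls2_decomp t s q hs hts,
    Finset.card_image_of_injective _ (cons_inj false)]
  rw [Finset.union_comm, Finset.card_union_of_disjoint (cls_disjoint _ _ _ _ _ _), Nat.add_comm]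

lemma dsc_replicate (t : ℕ) (b : Bool) : dsc (List.replicate t b) = 0 := by
  induction t with
  | zero => simp [dsc]
  | succ m ih =>
      rw [List.replicate_succ, dsc_cons, ih]
      cases m with
      | zero => simp
      | succ k => rw [List.replicate_succ]; cases b <;> simp

lemma cls1_t0 (s q : ℕ) : cls1 0 s q = ∅ := by
  rw [Finset.eq_empty_iff_forall_notMem]
  intro y hy
  simp only [cls1, Finset.mem_filter, mem_allWords] at hy
  obtain ⟨hlen, hcnt, hhd, hdsc⟩ := hy
  cases y with
  | nil => simp at hhd
  | cons a z =>
      have : a = true := by simpa using hhd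
      subst this
      simp [List.count_cons] at hcnt

lemma cls1_s0_card (t q : ℕ) : (cls1 t 0 q).card = if 1 ≤ t ∧ q = 0 then 1 else 0 := by
  have hset : cls1 t 0 q = if 1 ≤ t ∧ q = 0 then {List.replicate t true} else ∅ := by
    ext y
    simp only [cls1, Finset.mem_filter, mem_allWords]
    constructor
    · rintro ⟨hlen, hcnt, hhd, hdsc⟩
      have hrep : y = List.replicate t true := by
        rw [List.eq_replicate_iff]
        refine ⟨by omega, ?_⟩
        intro b hb
        have := List.count_eq_length.1 (by rw [hcnt]; omega : y.count true = y.length)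
        exact (this b hb).symm
      subst hrep
      have ht1 : 1 ≤ t := by
        by_contra h
        have : t = 0 := by omega
        subst this; simp at hhd
      have hq0 : q = 0 := by rw [dsc_replicate] at hdsc; omega
      rw [if_pos ⟨ht1, hq0⟩]; simp
    · intro hy
      by_cases hcond : 1 ≤ t ∧ q = 0
      · rw [if_pos hcond] at hy
        simp at hy; subst hy
        obtain ⟨t', rfl⟩ : ∃ t', t = t'+1 := ⟨t-1, by omega⟩
        refine ⟨by simp, by simp, by rw [List.replicate_succ]; simp, ?_⟩
        rw [dsc_replicate]; omega
      · rw [if_neg hcond] at hy; simp at hy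
  rw [hset]
  split <;> simp

lemma cls2_s0 (t q : ℕ) : cls2 t 0 q = ∅ := by
  rw [Finset.eq_empty_iff_forall_notMem]
  intro y hy
  simp only [cls2, Finset.mem_filter, mem_allWords] at hy
  obtain ⟨hlen, hcnt, hhd, hdsc⟩ := hy
  cases y with
  | nil => simp at hhd
  | cons a z =>
      have : a = false := by simpa using hhd
      subst this
      have := count_true_add_count_false (false :: z)
      simp only [List.length_cons] at this hlen
      simp [List.count_cons] at this hcnt
      omega

lemma cls2_card_01 (q : ℕ) : (cls2 0 1 q).card = if q = 0 then 1 else 0 := by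
  have hset : cls2 0 1 q = if q = 0 then {[false]} else ∅ := by
    ext y
    simp only [cls2, Finset.mem_filter, mem_allWords]
    constructor
    · rintro ⟨hlen, hcnt, hhd, hdsc⟩
      cases y with
      | nil => simp at hhd
      | cons a z =>
          have : a = false := by simpa using hhd
          subst this
          have hz : z = [] := by
            have : z.length = 0 := by simp only [List.length_cons] at hlen; omega
            exact List.length_eq_zero_iff.1 this
          subst hz
          have : dsc [false] = 0 := by simp [dsc]
          rw [if_pos (by omega)]
          simp
    · intro hy
      by_cases hq : q = 0
      · rw [if_pos hq] at hy
        simp at hy; subst hy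
        exact ⟨by simp, by simp, by simp, by simp [dsc]; omega⟩
      · rw [if_neg hq] at hy; simp at hy
  rw [hset]; split <;> simp

theorem cls_card_formulas : ∀ N t s q : ℕ, t + s = N → 1 ≤ s →
    ((1 ≤ q → (cls1 t s q).card = t.choose q * (s-1).choose (q-1)) ∧
     ((cls2 t s q).card = (s-1).choose q * t.choose q)) := by
  intro N
  induction N with
  | zero => intro t s q h hs; omega
  | succ N ih =>
      intro t s q hN hs
      constructor
      · intro hq
        rcases Nat.eq_zero_or_pos t with rfl | ht
        · rw [cls1_t0]
          obtain ⟨q', rfl⟩ : ∃ q', q = q'+1 := ⟨q-1, by omega⟩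
          simp [Nat.choose]
        · rw [card_cls1_rec t s q ht hs hq]
          obtain ⟨t', rfl⟩ : ∃ t', t = t'+1 := ⟨t-1, by omega⟩
          obtain ⟨q', rfl⟩ : ∃ q', q = q'+1 := ⟨q-1, by omega⟩
          simp only [Nat.add_sub_cancel]
          have h1 := (ih t' s (q'+1) (by omega) hs).1 (by omega)
          have h2 := (ih t' s q' (by omega) hs).2
          simp only [Nat.add_sub_cancel] at h1 ⊢
          have hp : (t'+1).choose (q'+1) = t'.choose q' + t'.choose (q'+1) :=
            Nat.choose_succ_succ t' q'
          rw [h1, h2, hp]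
          ring
      · rcases eq_or_lt_of_le hs with hs1 | hs2
        · -- s = 1
          have hs1' : s = 1 := hs1.symm
          subst hs1'
          rcases Nat.eq_zero_or_pos t with rfl | ht
          · rw [cls2_card_01]
            rcases Nat.eq_zero_or_pos q with rfl | hqpos
            · simp
            · obtain ⟨q', rfl⟩ : ∃ q', q = q'+1 := ⟨q-1, by omega⟩
              simp [Nat.choose]
          · rw [card_cls2_rec t 1 q (by omega) (by omega)]
            simp only [Nat.sub_self]
            rw [cls2_s0, cls1_s0_card]
            simp only [Finset.card_empty, Nat.zero_add]
            rcases Nat.eq_zero_or_pos q with rfl | hqpos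
            · rw [if_pos ⟨ht, rfl⟩]; simp
            · obtain ⟨q', rfl⟩ : ∃ q', q = q'+1 := ⟨q-1, by omega⟩
              rw [if_neg (by omega)]
              simp [Nat.choose]
        · -- s ≥ 2
          obtain ⟨s'', rfl⟩ : ∃ k, s = k+1 := ⟨s-1, by omega⟩
          have hs'' : 1 ≤ s'' := by omega
          rw [card_cls2_rec t (s''+1) q (by omega) (by omega)]
          simp only [Nat.add_sub_cancel]
          have h2 := (ih t s'' q (by omega) hs'').2
          rcases Nat.eq_zero_or_pos q with rfl | hqpos
          · have h1 : (cls1 t s'' 0).card = 0 := by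
              rw [cls1_empty_q0 t s'' hs'']; simp
            rw [h2, h1]
            simp
          · obtain ⟨q', rfl⟩ : ∃ q', q = q'+1 := ⟨q-1, by omega⟩
            have h1 := (ih t s'' (q'+1) (by omega) hs'').1 (by omega)
            simp only [Nat.add_sub_cancel] at h1 ⊢
            rw [h2, h1]
            obtain ⟨s3, rfl⟩ : ∃ k, s'' = k+1 := ⟨s''-1, by omega⟩
            simp only [Nat.add_sub_cancel]
            have hp : (s3+1).choose (q'+1) = s3.choose q' + s3.choose (q'+1) :=
              Nat.choose_succ_succ s3 q'
            rw [hp]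
            ring



lemma cls1_card (t s q : ℕ) (hs : 1 ≤ s) (hq : 1 ≤ q) :
    (cls1 t s q).card = t.choose q * (s-1).choose (q-1) :=
  (cls_card_formulas (t+s) t s q rfl hs).1 hq

lemma vandermonde_sq (t s R : ℕ) (h : s < R) :
    ∑ q ∈ range R, t.choose q * s.choose q = (t+s).choose s := by
  have h1 : (t+s).choose s = ∑ q ∈ range (s+1), t.choose q * s.choose (s - q) := by
    rw [Nat.add_choose_eq]
    rw [Finset.Nat.sum_antidiagonal_eq_sum_range_succ (f := fun i j => t.choose i * s.choose j)]
  have h2 : ∑ q ∈ range (s+1), t.choose q * s.choose (s - q)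
      = ∑ q ∈ range (s+1), t.choose q * s.choose q := by
    apply Finset.sum_congr rfl
    intro q hq
    rw [Nat.choose_symm (by simp at hq; omega : q ≤ s)]
  rw [h1, h2]
  apply (Finset.sum_subset _ _).symm
  · intro q hq
    simp only [Finset.mem_range] at hq ⊢
    omega
  · intro q _ hq
    simp only [Finset.mem_range, not_lt] at hq
    have : s < q := by omega
    rw [Nat.choose_eq_zero_of_lt this, Nat.mul_zero]

lemma sum_A_eq (t s : ℕ) (ht : 1 ≤ t) (hs : 1 ≤ s) :
    ∑ y ∈ (allWords (t+s)).filter (fun y => y.count true = t ∧ y.head? = some true), wfun y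
      = (((t+s).choose s : ℝ) - 1) / (2*s) := by
  set L := t + s with hL
  set A := (allWords (t+s)).filter (fun y => y.count true = t ∧ y.head? = some true) with hA
  have hmaps : ∀ y ∈ A, dsc y ∈ range (L+1) := by
    intro y hy
    simp only [hA, Finset.mem_filter, mem_allWords] at hy
    have := dsc_le_length y
    simp only [Finset.mem_range]
    omega
  have hsplit : ∑ y ∈ A, wfun y
      = ∑ q ∈ range (L+1), ∑ y ∈ A.filter (fun y => dsc y = q), wfun y :=
    (Finset.sum_fiberwise_of_maps_to hmaps wfun).symm
  have hfq : ∀ q, A.filter (fun y => dsc y = q) = cls1 t s q := by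
    intro q
    ext y
    simp only [hA, cls1, Finset.mem_filter, mem_allWords]
    tauto
  have hinner : ∀ q, 1 ≤ q → ∑ y ∈ cls1 t s q, wfun y
      = ((t.choose q * (s-1).choose (q-1) : ℕ) : ℝ) * ((2*q : ℕ) : ℝ)⁻¹ := by
    intro q hq
    have : ∀ y ∈ cls1 t s q, wfun y = ((2*q : ℕ) : ℝ)⁻¹ := by
      intro y hy
      simp only [cls1, Finset.mem_filter] at hy
      unfold wfun mst
      rw [if_pos hy.2.2.1, hy.2.2.2, max_eq_left hq]
    rw [Finset.sum_congr rfl this, Finset.sum_const, nsmul_eq_mul, cls1_card t s q hs hq]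
  have hterm : ∀ q, 1 ≤ q →
      ((t.choose q * (s-1).choose (q-1) : ℕ) : ℝ) * ((2*q : ℕ) : ℝ)⁻¹
        = ((t.choose q * s.choose q : ℕ) : ℝ) / (2*s) := by
    intro q hq
    have hid : q * s.choose q = s * (s-1).choose (q-1) := by
      obtain ⟨s', rfl⟩ : ∃ k, s = k+1 := ⟨s-1, by omega⟩
      obtain ⟨q', rfl⟩ : ∃ k, q = k+1 := ⟨q-1, by omega⟩
      simp only [Nat.add_sub_cancel]
      rw [mul_comm (q'+1) _, ← Nat.add_one_mul_choose_eq]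
    have hq0 : ((2*q : ℕ) : ℝ) ≠ 0 := by positivity
    have hs0 : (2*(s:ℝ)) ≠ 0 := by positivity
    have hidR : (q:ℝ) * (s.choose q : ℝ) = (s:ℝ) * ((s-1).choose (q-1) : ℝ) := by
      exact_mod_cast hid
    rw [inv_eq_one_div, mul_one_div, div_eq_div_iff hq0 hs0]
    push_cast
    linear_combination (-2*((t.choose q : ℕ):ℝ)) * hidR
  -- assemble
  rw [hsplit]
  have : ∀ q ∈ range (L+1), ∑ y ∈ A.filter (fun y => dsc y = q), wfun y
      = (if q = 0 then 0 else ((t.choose q * s.choose q : ℕ) : ℝ) / (2*s)) := by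
    intro q _
    rw [hfq q]
    rcases Nat.eq_zero_or_pos q with rfl | hqpos
    · rw [cls1_empty_q0 t s hs]; simp
    · rw [if_neg (by omega), hinner q hqpos, hterm q hqpos]
  have hstep : ∀ i : ℕ, (if i + 1 = 0 then (0:ℝ) else ((t.choose (i+1) * s.choose (i+1) : ℕ) : ℝ) / (2*s))
      = ((t.choose (i+1) * s.choose (i+1) : ℕ) : ℝ) / (2*s) := by
    intro i; rw [if_neg (by omega)]
  have hnat : ∑ i ∈ range L, ((t.choose (i+1) : ℝ) * (s.choose (i+1) : ℝ))
      = ((t+s).choose s : ℝ) - 1 := by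
    have h1 : ∑ q ∈ range (L+1), t.choose q * s.choose q = (t+s).choose s :=
      vandermonde_sq t s (L+1) (by omega)
    rw [Finset.sum_range_succ'] at h1
    simp only [Nat.choose_zero_right, Nat.mul_one] at h1
    have heq : ∑ i ∈ range L, t.choose (i+1) * s.choose (i+1) = (t+s).choose s - 1 := by omega
    have hge : 1 ≤ (t+s).choose s := Nat.choose_pos (by omega)
    have hc := congrArg (Nat.cast : ℕ → ℝ) heq
    push_cast [Nat.cast_sub hge] at hc
    exact hc
  have htail : ∑ q ∈ range (L+1),
      (if q = 0 then (0:ℝ) else ((t.choose q * s.choose q : ℕ) : ℝ) / (2*s))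
      = (((t+s).choose s : ℝ) - 1) / (2*s) := by
    rw [Finset.sum_range_succ']
    simp only [hstep]
    norm_num
    rw [← Finset.sum_div, hnat]
  rw [Finset.sum_congr rfl this, htail]


lemma dsc_map_not (l : List Bool) : dsc (l.map (!·)) = asc l := by
  induction l with
  | nil => simp [dsc, asc]
  | cons a z ih =>
      cases z with
      | nil => simp [dsc, asc]
      | cons b t =>
          simp only [List.map_cons] at ih ⊢
          rw [show dsc ((!a) :: (!b) :: List.map (!·) t)
              = (if (!a) && !(!b) then 1 else 0) + dsc ((!b) :: List.map (!·) t) from rfl]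
          rw [show asc (a :: b :: t) = (if !a && b then 1 else 0) + asc (b :: t) from rfl]
          rw [ih]
          simp

lemma count_true_map_not (l : List Bool) : (l.map (!·)).count true = l.count false := by
  induction l with
  | nil => simp
  | cons a z ih => cases a <;> simp [List.count_cons, ih]

lemma map_not_invol (l : List Bool) : (l.map (!·)).map (!·) = l := by
  simp [List.map_map, Function.comp_def]

lemma sum_A_eq' (L t s : ℕ) (hL : L = t + s) (ht : 1 ≤ t) (hs : 1 ≤ s) :
    ∑ y ∈ (allWords L).filter (fun y => y.count true = t ∧ y.head? = some true), wfun y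
      = ((L.choose s : ℝ) - 1) / (2*s) := by
  subst hL; exact sum_A_eq t s ht hs

lemma sum_B_eq' (L t s : ℕ) (hL : L = t + s) (ht : 1 ≤ t) (hs : 1 ≤ s) :
    ∑ y ∈ (allWords L).filter (fun y => y.count true = t ∧ y.head? = some false), wfun y
      = ((L.choose t : ℝ) - 1) / (2*t) := by
  have himg : ((allWords L).filter (fun y => y.count true = t ∧ y.head? = some false)).image
      (fun y => y.map (!·))
      = (allWords L).filter (fun y => y.count true = s ∧ y.head? = some true) := by
    ext z
    simp only [Finset.mem_image, Finset.mem_filter, mem_allWords]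
    constructor
    · rintro ⟨y, ⟨hlen, hcnt, hhd⟩, rfl⟩
      refine ⟨by simp [hlen], ?_, ?_⟩
      · rw [count_true_map_not]
        have := count_true_add_count_false y
        omega
      · rw [List.head?_map, hhd]; rfl
    · rintro ⟨hlen, hcnt, hhd⟩
      refine ⟨z.map (!·), ⟨by simp [hlen], ?_, ?_⟩, map_not_invol z⟩
      · rw [count_true_map_not]
        have h1 := count_true_add_count_false z
        have h2 : (z.map (!·)).count true + (z.map (!·)).count false = L := by
          rw [count_true_add_count_false]; simp [hlen]
        rw [count_true_map_not] at h2
        omega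
      · rw [List.head?_map, hhd]; rfl
  have hinj : ∀ y ∈ (allWords L).filter (fun y => y.count true = t ∧ y.head? = some false),
      ∀ y' ∈ (allWords L).filter (fun y => y.count true = t ∧ y.head? = some false),
      y.map (!·) = y'.map (!·) → y = y' := by
    intro y1 _ y2 _ h
    have h2 := congrArg (List.map (!·)) h
    rwa [map_not_invol, map_not_invol] at h2
  have hsum : ∑ z ∈ ((allWords L).filter
        (fun y => y.count true = t ∧ y.head? = some false)).image (fun y => y.map (!·)), wfun z
      = ∑ y ∈ (allWords L).filter (fun y => y.count true = t ∧ y.head? = some false),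
          wfun (y.map (!·)) := Finset.sum_image hinj
  rw [himg] at hsum
  have hwinv : ∀ y ∈ (allWords L).filter (fun y => y.count true = t ∧ y.head? = some false),
      wfun (y.map (!·)) = wfun y := by
    intro y hy
    simp only [Finset.mem_filter] at hy
    unfold wfun mst
    rw [List.head?_map, hy.2.2]
    have hmap : (some false).map (!·) = some true := rfl
    rw [hmap, if_pos rfl, dsc_map_not]
    simp
  rw [Finset.sum_congr rfl hwinv] at hsum
  rw [← hsum]
  rw [sum_A_eq' L s t (by omega) hs ht]

lemma split_head (L c : ℕ) (hL : 1 ≤ L) :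
    (allWords L).filter (fun y => y.count true = c)
      = (allWords L).filter (fun y => y.count true = c ∧ y.head? = some true)
        ∪ (allWords L).filter (fun y => y.count true = c ∧ y.head? = some false) := by
  ext y
  simp only [Finset.mem_union, Finset.mem_filter, mem_allWords]
  constructor
  · rintro ⟨hlen, hcnt⟩
    cases y with
    | nil => simp at hlen; omega
    | cons a z => cases a
                  · exact Or.inr ⟨hlen, hcnt, rfl⟩
                  · exact Or.inl ⟨hlen, hcnt, rfl⟩
  · rintro (⟨hlen, hcnt, _⟩ | ⟨hlen, hcnt, _⟩) <;> exact ⟨hlen, hcnt⟩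

lemma sum_V_bound (n : ℕ) (hn : Even n) (h4 : 4 ≤ n) :
    ∑ y ∈ (allWords (n-1)).filter
      (fun y => y.count true = n/2 ∨ y.count true = n/2 - 1), wfun y
      ≤ 2 * (((n.choose (n/2)) : ℝ) - 2) / ((n:ℝ) - 2) := by
  have hn2 : 2 * (n/2) = n := Nat.two_mul_div_two_of_even hn
  set h := n / 2 with hh
  have h2 : 2 ≤ h := by omega
  have hL1 : n - 1 = h + (h-1) := by omega
  have hL2 : n - 1 = (h-1) + h := by omega
  have hdisjPQ : Disjoint
      ((allWords (n-1)).filter (fun y => y.count true = h))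
      ((allWords (n-1)).filter (fun y => y.count true = h - 1)) := by
    rw [Finset.disjoint_left]
    intro y hy1 hy2
    simp only [Finset.mem_filter] at hy1 hy2
    omega
  have hdisjHT : ∀ c : ℕ, Disjoint
      ((allWords (n-1)).filter (fun y => y.count true = c ∧ y.head? = some true))
      ((allWords (n-1)).filter (fun y => y.count true = c ∧ y.head? = some false)) := by
    intro c
    rw [Finset.disjoint_left]
    intro y hy1 hy2
    simp only [Finset.mem_filter] at hy1 hy2
    rw [hy1.2.2] at hy2
    simpa using hy2.2.2
  rw [Finset.filter_or, Finset.sum_union hdisjPQ,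
    split_head (n-1) h (by omega), split_head (n-1) (h-1) (by omega),
    Finset.sum_union (hdisjHT h), Finset.sum_union (hdisjHT (h-1)),
    sum_A_eq' (n-1) h (h-1) hL1 (by omega) (by omega),
    sum_B_eq' (n-1) h (h-1) hL1 (by omega) (by omega),
    sum_A_eq' (n-1) (h-1) h hL2 (by omega) (by omega),
    sum_B_eq' (n-1) (h-1) h hL2 (by omega) (by omega)]
  -- numbers
  set H := (n-1).choose (h-1) with hHdef
  have hsymm : (n-1).choose h = H := by
    rw [hHdef, ← Nat.choose_symm (by omega : h ≤ n - 1)]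
    congr 1
    omega
  have hM : n.choose h = 2 * H := by
    obtain ⟨k, hk⟩ : ∃ k, h = k + 1 := ⟨h-1, by omega⟩
    obtain ⟨m, hm⟩ : ∃ m, n = m + 1 := ⟨n-1, by omega⟩
    have e : n.choose h = m.choose k + m.choose (k+1) := by
      rw [hm, hk]; exact Nat.choose_succ_succ m k
    have e2 : m = n - 1 := by omega
    have e3 : k = h - 1 := by omega
    rw [e, e2, e3, show h - 1 + 1 = h by omega, hsymm]
    rw [hHdef]
    omega
  rw [hsymm, hM]
  have hHpos : 1 ≤ H := by
    rw [hHdef]; exact Nat.choose_pos (by omega)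
  have hhr : (2:ℝ) ≤ (h:ℝ) := by exact_mod_cast h2
  have hHr : (1:ℝ) ≤ (H:ℝ) := by exact_mod_cast hHpos
  have hcas : ((h - 1 : ℕ):ℝ) = (h:ℝ) - 1 := by
    rw [Nat.cast_sub (by omega : 1 ≤ h)]; simp
  have hcn : ((n:ℝ)) = 2*(h:ℝ) := by
    have : ((2 * h : ℕ) : ℝ) = (n:ℝ) := by exact_mod_cast congrArg (Nat.cast : ℕ → ℝ) hn2
    push_cast at this
    linarith
  rw [hcas, hcn]
  push_cast
  have h1 : (0:ℝ) < (h:ℝ) - 1 := by linarith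
  have h0 : (0:ℝ) < (h:ℝ) := by linarith
  have e2 : 2*(2*(H:ℝ)-2)/(2*(h:ℝ)-2) = 2*((H:ℝ)-1)/((h:ℝ)-1) := by
    rw [div_eq_div_iff (by linarith) (by linarith)]; ring
  rw [e2]
  have e1 : ((H:ℝ)-1)/(2*((h:ℝ)-1)) + ((H:ℝ)-1)/(2*(h:ℝ))
      + (((H:ℝ)-1)/(2*(h:ℝ)) + ((H:ℝ)-1)/(2*((h:ℝ)-1)))
      = ((H:ℝ)-1)/((h:ℝ)-1) + ((H:ℝ)-1)/(h:ℝ) := by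
    field_simp
    ring
  rw [e1]
  have e3 : ((H:ℝ)-1)/(h:ℝ) ≤ ((H:ℝ)-1)/((h:ℝ)-1) := by
    apply div_le_div_of_nonneg_left (by linarith) h1 (by linarith)
  have e4 : 2*((H:ℝ)-1)/((h:ℝ)-1) = ((H:ℝ)-1)/((h:ℝ)-1) + ((H:ℝ)-1)/((h:ℝ)-1) := by
    ring
  linarith


/-- Theorem: upper bound on the maximum size `A^D(n)` of a balanced
`(n,1;B^D)`-reconstruction code (single-deletion balls pairwise disjoint). -/
theorem stmt8 (n : ℕ) (hn : Even n) (h4 : 4 ≤ n) (C : Set (List Bool))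
    (hC : C ⊆ balanced n)
    (hdisj : ∀ x ∈ C, ∀ y ∈ C, x ≠ y → BD x ∩ BD y = ∅) :
    (C.ncard : ℝ) ≤ 2 * (((n.choose (n / 2) : ℕ) : ℝ) - 2) / ((n : ℝ) - 2) := by
  classical
  have hsub : C ⊆ ↑(allWords n) := by
    intro x hx
    rw [Finset.mem_coe, mem_allWords]
    exact (hC hx).1
  have hfin : C.Finite := Set.Finite.subset (allWords n).finite_toSet hsub
  have hncard : C.ncard = hfin.toFinset.card := Set.ncard_eq_toFinset_card _ hfin
  set Cfin := hfin.toFinset with hCfin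
  -- basic properties of codewords
  have hprops : ∀ x ∈ Cfin, x ≠ [] ∧ true ∈ x ∧ false ∈ x := by
    intro x hx
    rw [hCfin, Set.Finite.mem_toFinset] at hx
    obtain ⟨hlen, hcnt⟩ := hC hx
    have hfc := count_true_add_count_false x
    refine ⟨?_, ?_, ?_⟩
    · intro he; subst he; simp at hlen; omega
    · have : 0 < x.count true := by omega
      exact List.count_pos_iff.1 this
    · have : 0 < x.count false := by omega
      exact List.count_pos_iff.1 this
  have h1 : (Cfin.card : ℝ) ≤ ∑ x ∈ Cfin, ∑ y ∈ ballFin x, wfun y := by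
    calc (Cfin.card : ℝ) = ∑ _x ∈ Cfin, (1:ℝ) := by rw [Finset.sum_const, nsmul_eq_mul, mul_one]
      _ ≤ _ := Finset.sum_le_sum (fun x hx => by
            obtain ⟨h1, h2, h3⟩ := hprops x hx
            exact ball_weight_ge_one x h1 h2 h3)
  have hpair : (↑Cfin : Set (List Bool)).PairwiseDisjoint ballFin := by
    intro x hx y hy hxy
    have hx' : x ∈ C := by rwa [Finset.mem_coe, hCfin, Set.Finite.mem_toFinset] at hx
    have hy' : y ∈ C := by rwa [Finset.mem_coe, hCfin, Set.Finite.mem_toFinset] at hy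
    have hBD := hdisj x hx' y hy' hxy
    simp only [Function.onFun]
    rw [Finset.disjoint_left]
    intro z hz1 hz2
    have : z ∈ BD x ∩ BD y := ⟨(mem_BD_iff x z).2 hz1, (mem_BD_iff y z).2 hz2⟩
    rw [hBD] at this
    exact this
  have h2 : ∑ x ∈ Cfin, ∑ y ∈ ballFin x, wfun y = ∑ y ∈ Cfin.biUnion ballFin, wfun y :=
    (Finset.sum_biUnion hpair).symm
  have hsubV : Cfin.biUnion ballFin ⊆ (allWords (n-1)).filter
      (fun y => y.count true = n/2 ∨ y.count true = n/2 - 1) := by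
    intro y hy
    obtain ⟨x, hx, hyx⟩ := Finset.mem_biUnion.1 hy
    have hx' : x ∈ C := by rwa [hCfin, Set.Finite.mem_toFinset] at hx
    obtain ⟨hlen, hcnt⟩ := hC hx'
    obtain ⟨u, v, b, hxe, hye⟩ := (mem_BD_iff x y).2 hyx
    rw [Finset.mem_filter, mem_allWords]
    subst hxe; subst hye
    constructor
    · simp only [List.length_append, List.length_cons] at hlen ⊢
      omega
    · simp only [List.count_append, List.count_cons] at hcnt ⊢
      cases b
      · left; simpa using hcnt
      · right; simp at hcnt ⊢; omega
  have h3 : ∑ y ∈ Cfin.biUnion ballFin, wfun y ≤ ∑ y ∈ (allWords (n-1)).filter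
      (fun y => y.count true = n/2 ∨ y.count true = n/2 - 1), wfun y :=
    Finset.sum_le_sum_of_subset_of_nonneg hsubV (fun y _ _ => wfun_nonneg y)
  have h4' := sum_V_bound n hn h4
  rw [hncard]
  push_cast
  calc (Cfin.card : ℝ) ≤ _ := h1
    _ = _ := h2
    _ ≤ _ := h3
    _ ≤ _ := h4'

end Stmt8Dev

end BRC
end

section
/- Let n ≥ 2 be even, let B ∈ {B^D, B^I}, and let x, y be distinct words in U_n with Hamming distance d_H(x,y) = 2. Then |B(x) ∩ B(y)| = 1 if and only if x and y are Type-B-confusable. -/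
namespace BRC

/- ### basic helpers -/

lemma rep_shift (k : ℕ) (c : Bool) (s : List Bool) :
    List.replicate k c ++ c :: s = c :: (List.replicate k c ++ s) := by
  have h : List.replicate k c ++ [c] = c :: List.replicate k c := by
    rw [← List.replicate_succ', List.replicate_succ]
  calc List.replicate k c ++ c :: s = (List.replicate k c ++ [c]) ++ s := by simp
    _ = c :: (List.replicate k c ++ s) := by rw [h]; simp

lemma bd_length {x z : List Bool} (h : z ∈ BD x) : z.length + 1 = x.length := by
  obtain ⟨u, v, b, rfl, rfl⟩ := h; simp; omega

lemma bi_length {x z : List Bool} (h : z ∈ BI x) : z.length = x.length + 1 := by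
  obtain ⟨u, v, b, rfl, rfl⟩ := h; simp; omega

lemma bd_head (h : Bool) (t : List Bool) : t ∈ BD (h :: t) := ⟨[], t, h, rfl, rfl⟩

lemma bd_cons_of {t w : List Bool} (h : Bool) (hw : w ∈ BD t) : h :: w ∈ BD (h :: t) := by
  obtain ⟨u, v, b, rfl, rfl⟩ := hw; exact ⟨h :: u, v, b, rfl, rfl⟩

lemma bi_front (b : Bool) (x : List Bool) : b :: x ∈ BI x := ⟨[], x, b, rfl, rfl⟩

lemma bi_cons_of {t w : List Bool} (h : Bool) (hw : w ∈ BI t) : h :: w ∈ BI (h :: t) := by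
  obtain ⟨u, v, b, rfl, rfl⟩ := hw; exact ⟨h :: u, v, b, rfl, rfl⟩

lemma mem_bd_cons {h : Bool} {t z : List Bool} (hz : z ∈ BD (h :: t)) :
    z = t ∨ ∃ w ∈ BD t, z = h :: w := by
  obtain ⟨u, v, b, h1, rfl⟩ := hz
  cases u with
  | nil =>
    left
    injection h1 with e1 e2
    simp [e2]
  | cons hu u' =>
    right
    injection h1 with e1 e2
    exact ⟨u' ++ v, ⟨u', v, b, e2, rfl⟩, by simp [e1]⟩

lemma mem_bi_cons {h : Bool} {t z : List Bool} (hz : z ∈ BI (h :: t)) :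
    (∃ b, z = b :: h :: t) ∨ ∃ w ∈ BI t, z = h :: w := by
  obtain ⟨u, v, b, h1, rfl⟩ := hz
  cases u with
  | nil =>
    left
    simp only [List.nil_append] at h1
    exact ⟨b, by simp [← h1]⟩
  | cons hu u' =>
    right
    injection h1 with e1 e2
    exact ⟨u' ++ b :: v, ⟨u', v, b, e2, rfl⟩, by simp [e1]⟩

lemma bd_append_right (p : List Bool) {X w : List Bool} (h : w ∈ BD X) :
    p ++ w ∈ BD (p ++ X) := by
  obtain ⟨u, v, b, rfl, rfl⟩ := h
  exact ⟨p ++ u, v, b, by simp, by simp⟩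

lemma bi_append_right (p : List Bool) {X w : List Bool} (h : w ∈ BI X) :
    p ++ w ∈ BI (p ++ X) := by
  obtain ⟨u, v, b, rfl, rfl⟩ := h
  exact ⟨p ++ u, v, b, by simp, by simp⟩

lemma bd_append_cases {p X z : List Bool} (hz : z ∈ BD (p ++ X)) :
    (∃ d ∈ BD p, z = d ++ X) ∨ (∃ w ∈ BD X, z = p ++ w) := by
  obtain ⟨u, v, b, h1, rfl⟩ := hz
  rcases List.append_eq_append_iff.mp h1 with ⟨a', ha1, ha2⟩ | ⟨c', hc1, hc2⟩
  · right
    exact ⟨a' ++ v, ⟨a', v, b, ha2, rfl⟩, by simp [ha1]⟩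
  · cases c' with
    | nil =>
      right
      refine ⟨v, ⟨[], v, b, (by simpa using hc2.symm), rfl⟩, by simp [hc1]⟩
    | cons c0 c'' =>
      left
      injection hc2 with e1 e2
      refine ⟨u ++ c'', ⟨u, c'', b, by rw [hc1, e1], rfl⟩, by simp [e2]⟩

lemma bi_append_cases {p X z : List Bool} (hz : z ∈ BI (p ++ X)) :
    (∃ d ∈ BI p, z = d ++ X) ∨ (∃ w ∈ BI X, z = p ++ w) := by
  obtain ⟨u, v, b, h1, rfl⟩ := hz
  rcases List.append_eq_append_iff.mp h1 with ⟨a', ha1, ha2⟩ | ⟨c', hc1, hc2⟩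
  · right
    exact ⟨a' ++ b :: v, ⟨a', v, b, ha2, rfl⟩, by simp [ha1]⟩
  · left
    exact ⟨u ++ b :: c', ⟨u, c', b, hc1, rfl⟩, by simp [hc2]⟩


/- ### reduction to empty common prefix -/

lemma bd_inter_reduce {p X Y z : List Bool} (hlen : X.length = Y.length) (hne : X ≠ Y)
    (hzx : z ∈ BD (p ++ X)) (hzy : z ∈ BD (p ++ Y)) :
    ∃ w, w ∈ BD X ∧ w ∈ BD Y ∧ z = p ++ w := by
  rcases bd_append_cases hzx with ⟨d, hd, rfl⟩ | ⟨w, hw, rfl⟩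
  · rcases bd_append_cases hzy with ⟨d', hd', he⟩ | ⟨w', hw', he⟩
    · have l1 := bd_length hd; have l2 := bd_length hd'
      obtain ⟨h1, h2⟩ := List.append_inj he (by omega)
      exact absurd h2 hne
    · cases X with
      | nil =>
        cases Y with
        | nil => exact absurd rfl hne
        | cons _ _ => simp at hlen
      | cons h t =>
        have l1 := bd_length hd
        have he' : (d ++ [h]) ++ t = p ++ w' := by simpa using he
        obtain ⟨h1, h2⟩ := List.append_inj he' (by simp; omega)
        exact ⟨t, bd_head h t, h2 ▸ hw', by rw [he, ← h2]⟩
  · rcases bd_append_cases hzy with ⟨d', hd', he⟩ | ⟨w', hw', he⟩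
    · cases Y with
      | nil =>
        cases X with
        | nil => exact absurd rfl hne
        | cons _ _ => simp at hlen
      | cons h' t' =>
        have l1 := bd_length hd'
        have he' : p ++ w = (d' ++ [h']) ++ t' := by simpa using he
        obtain ⟨h1, h2⟩ := List.append_inj he' (by simp; omega)
        exact ⟨w, hw, h2 ▸ bd_head h' t', rfl⟩
    · have h2 := List.append_cancel_left he
      exact ⟨w, hw, h2 ▸ hw', rfl⟩

lemma bi_inter_reduce {p X Y z : List Bool} (hlen : X.length = Y.length) (hne : X ≠ Y)
    (hzx : z ∈ BI (p ++ X)) (hzy : z ∈ BI (p ++ Y)) :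
    ∃ w, w ∈ BI X ∧ w ∈ BI Y ∧ z = p ++ w := by
  rcases bi_append_cases hzx with ⟨d, hd, rfl⟩ | ⟨w, hw, rfl⟩
  · rcases bi_append_cases hzy with ⟨d', hd', he⟩ | ⟨w', hw', he⟩
    · have l1 := bi_length hd; have l2 := bi_length hd'
      obtain ⟨h1, h2⟩ := List.append_inj he (by omega)
      exact absurd h2 hne
    · have l1 := bi_length hd
      rcases List.append_eq_append_iff.mp he with ⟨a', ha1, ha2⟩ | ⟨c', hc1, hc2⟩
      · have : p.length = d.length + a'.length := by rw [ha1]; simp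
        omega
      · have hc'len : c'.length = 1 := by
          have : d.length = p.length + c'.length := by rw [hc1]; simp
          omega
        obtain ⟨dl, rfl⟩ := List.length_eq_one_iff.mp hc'len
        have hw'' : dl :: X ∈ BI Y := by rw [← List.singleton_append, ← hc2]; exact hw'
        refine ⟨dl :: X, bi_front dl X, hw'', ?_⟩
        rw [he, hc2]; simp
  · rcases bi_append_cases hzy with ⟨d', hd', he⟩ | ⟨w', hw', he⟩
    · have l1 := bi_length hd'
      rcases List.append_eq_append_iff.mp he with ⟨a', ha1, ha2⟩ | ⟨c', hc1, hc2⟩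
      · have ha'len : a'.length = 1 := by
          have : d'.length = p.length + a'.length := by rw [ha1]; simp
          omega
        obtain ⟨dl, rfl⟩ := List.length_eq_one_iff.mp ha'len
        have hw'' : dl :: Y ∈ BI X := by rw [← List.singleton_append, ← ha2]; exact hw
        refine ⟨dl :: Y, hw'', bi_front dl Y, ?_⟩
        rw [ha2]; simp
      · have : p.length = d'.length + c'.length := by rw [hc1]; simp
        omega
    · have h2 := List.append_cancel_left he
      exact ⟨w, hw, h2 ▸ hw', rfl⟩

/- ### core (empty prefix) analysis -/

lemma del_aux : ∀ (m : List Bool) {a : Bool} {s w : List Bool},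
    w ∈ BD (m ++ a :: s) → m ++ (!a) :: s = (!a) :: w →
    m = List.replicate m.length (!a) := by
  intro m
  induction m with
  | nil => intro a s w _ _; rfl
  | cons c0 m' ih =>
    intro a s w hw he
    injection he with e1 e2
    subst e1
    rcases mem_bd_cons hw with h | ⟨w2, hw2, he2⟩
    · rw [← e2] at h
      have := List.append_cancel_left h
      simp at this
    · rw [he2] at e2
      have := ih hw2 e2
      rw [List.length_cons, List.replicate_succ, ← this]

lemma ins_aux : ∀ (m : List Bool) {a : Bool} {s : List Bool},
    (a :: (m ++ (!a) :: s)) ∈ BI (m ++ a :: s) → m = List.replicate m.length a := by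
  intro m
  induction m with
  | nil => intro a s _; rfl
  | cons c0 m' ih =>
    intro a s h
    rcases mem_bi_cons h with ⟨b, hb⟩ | ⟨w, hw, he⟩
    · injection hb with e1 e2
      injection e2 with e3 e4
      have := List.append_cancel_left e4
      simp at this
    · injection he with e1 e2
      subst e1
      rw [← e2] at hw
      have := ih hw
      rw [List.length_cons, List.replicate_succ, ← this]

lemma coreD {a : Bool} {m s z : List Bool}
    (hzx : z ∈ BD (a :: (m ++ (!a) :: s))) (hzy : z ∈ BD ((!a) :: (m ++ a :: s))) :
    ∃ c, m = List.replicate m.length c ∧ z = c :: (m ++ s) := by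
  rcases mem_bd_cons hzx with rfl | ⟨w, hw, rfl⟩
  · rcases mem_bd_cons hzy with h | ⟨w', hw', he'⟩
    · exfalso
      have := List.append_cancel_left h
      simp at this
    · have hrep := del_aux m hw' he'
      refine ⟨!a, hrep, ?_⟩
      rw [hrep]
      exact rep_shift _ _ _
  · rcases mem_bd_cons hzy with h | ⟨w', hw', he'⟩
    · have hw' : w ∈ BD (m ++ (!a) :: s) := hw
      have he2 : m ++ (!(!a)) :: s = (!(!a)) :: w := by simpa using h.symm
      have hrep := del_aux m (by simpa using hw) he2
      simp only [Bool.not_not] at hrep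
      refine ⟨a, hrep, ?_⟩
      rw [h]
      rw [hrep]
      exact rep_shift _ _ _
    · exfalso
      injection he' with e1
      simp at e1
  
lemma coreI {a : Bool} {m s z : List Bool}
    (hzx : z ∈ BI (a :: (m ++ (!a) :: s))) (hzy : z ∈ BI ((!a) :: (m ++ a :: s))) :
    ∃ c, m = List.replicate m.length c ∧ z = (!c) :: (c :: (m ++ (!c) :: s)) := by
  rcases mem_bi_cons hzx with ⟨b, rfl⟩ | ⟨w, hw, rfl⟩
  · rcases mem_bi_cons hzy with ⟨b', he⟩ | ⟨w', hw', he⟩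
    · exfalso
      injection he with e1 e2
      injection e2 with e3 e4
      simp at e3
    · injection he with e1 e2
      subst e1
      rw [← e2] at hw'
      have hrep := ins_aux m hw'
      exact ⟨a, hrep, rfl⟩
  · rcases mem_bi_cons hzy with ⟨b', he⟩ | ⟨w', hw', he⟩
    · injection he with e1 e2
      rw [e2] at hw
      have hw2 : ((!a) :: (m ++ (!(!a)) :: s)) ∈ BI (m ++ (!a) :: s) := by
        simpa using hw
      have hrep := ins_aux m hw2
      refine ⟨!a, hrep, ?_⟩
      simp [e2]
    · exfalso
      injection he with e1
      simp at e1


/- ### characterization of intersections -/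

lemma memD_of (a c : Bool) (m s : List Bool) (hrep : m = List.replicate m.length c) :
    (c :: (m ++ s)) ∈ BD (a :: (m ++ (!a) :: s)) := by
  by_cases hca : c = a
  · subst hca
    exact ⟨c :: m, s, !c, by simp, by simp⟩
  · have hc : c = !a := by cases a <;> cases c <;> simp_all
    subst hc
    refine ⟨[], m ++ (!a) :: s, a, rfl, ?_⟩
    rw [hrep]
    rw [rep_shift]
    simp

lemma memI_of (a c : Bool) (m s : List Bool) (hrep : m = List.replicate m.length c) :
    ((!c) :: (c :: (m ++ (!c) :: s))) ∈ BI (a :: (m ++ (!a) :: s)) := by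
  by_cases hca : c = a
  · subst hca
    exact ⟨[], c :: (m ++ (!c) :: s), !c, rfl, rfl⟩
  · have hc : c = !a := by cases a <;> cases c <;> simp_all
    subst hc
    refine ⟨a :: (m ++ [!a]), s, a, by simp, ?_⟩
    simp only [Bool.not_not]
    rw [hrep, rep_shift]
    simp

lemma charD (p : List Bool) (a : Bool) (m s : List Bool) :
    BD (p ++ a :: (m ++ (!a) :: s)) ∩ BD (p ++ (!a) :: (m ++ a :: s)) =
      {z | ∃ c, m = List.replicate m.length c ∧ z = p ++ c :: (m ++ s)} := by
  ext z
  simp only [Set.mem_inter_iff, Set.mem_setOf_eq]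
  constructor
  · rintro ⟨h1, h2⟩
    obtain ⟨w, hwX, hwY, rfl⟩ := bd_inter_reduce (by simp) (by cases a <;> simp) h1 h2
    obtain ⟨c, hc, rfl⟩ := coreD hwX hwY
    exact ⟨c, hc, rfl⟩
  · rintro ⟨c, hc, rfl⟩
    constructor
    · exact bd_append_right p (memD_of a c m s hc)
    · have := memD_of (!a) c m s hc
      simp only [Bool.not_not] at this
      exact bd_append_right p this

lemma charI (p : List Bool) (a : Bool) (m s : List Bool) :
    BI (p ++ a :: (m ++ (!a) :: s)) ∩ BI (p ++ (!a) :: (m ++ a :: s)) =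
      {z | ∃ c, m = List.replicate m.length c ∧ z = p ++ (!c) :: (c :: (m ++ (!c) :: s))} := by
  ext z
  simp only [Set.mem_inter_iff, Set.mem_setOf_eq]
  constructor
  · rintro ⟨h1, h2⟩
    obtain ⟨w, hwX, hwY, rfl⟩ := bi_inter_reduce (by simp) (by cases a <;> simp) h1 h2
    obtain ⟨c, hc, rfl⟩ := coreI hwX hwY
    exact ⟨c, hc, rfl⟩
  · rintro ⟨c, hc, rfl⟩
    constructor
    · exact bi_append_right p (memI_of a c m s hc)
    · have := memI_of (!a) c m s hc
      simp only [Bool.not_not] at this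
      exact bi_append_right p this


/- ### hamming distance normal forms -/

lemma ham_cons_eq (c : Bool) (x y : List Bool) :
    hammingDist (c :: x) (c :: y) = hammingDist x y := by
  unfold hammingDist
  rw [List.zip_cons_cons, List.countP_cons]
  simp

lemma ham_cons_ne {c c' : Bool} (h : c ≠ c') (x y : List Bool) :
    hammingDist (c :: x) (c' :: y) = 1 + hammingDist x y := by
  unfold hammingDist
  rw [List.zip_cons_cons, List.countP_cons]
  simp [h]
  omega

lemma eq_of_ham0 : ∀ (x y : List Bool), x.length = y.length → hammingDist x y = 0 → x = y := by
  intro x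
  induction x with
  | nil =>
    intro y hl _
    cases y with
    | nil => rfl
    | cons _ _ => simp at hl
  | cons c x' ih =>
    intro y hl h0
    cases y with
    | nil => simp at hl
    | cons c' y' =>
      by_cases hc : c = c'
      · subst hc
        rw [ham_cons_eq] at h0
        rw [ih y' (by simpa using hl) h0]
      · rw [ham_cons_ne hc] at h0
        omega

lemma nf1 : ∀ (x y : List Bool), x.length = y.length → hammingDist x y = 1 →
    ∃ (m : List Bool) (b : Bool) (s : List Bool), x = m ++ b :: s ∧ y = m ++ (!b) :: s := by
  intro x
  induction x with
  | nil =>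
    intro y hl h
    cases y with
    | nil => simp [hammingDist] at h
    | cons _ _ => simp at hl
  | cons c x' ih =>
    intro y hl h
    cases y with
    | nil => simp at hl
    | cons c' y' =>
      by_cases hc : c = c'
      · subst hc
        rw [ham_cons_eq] at h
        obtain ⟨m, b, s, h1, h2⟩ := ih y' (by simpa using hl) h
        exact ⟨c :: m, b, s, by simp [h1], by simp [h2]⟩
      · have h0 : hammingDist x' y' = 0 := by rw [ham_cons_ne hc] at h; omega
        have hxy : x' = y' := eq_of_ham0 x' y' (by simpa using hl) h0
        subst hxy
        have hc' : c' = !c := by cases c <;> cases c' <;> simp_all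
        exact ⟨[], c, x', by simp, by simp [hc']⟩

lemma nf2 : ∀ (x y : List Bool), x.length = y.length → x.count true = y.count true →
    hammingDist x y = 2 →
    ∃ (p : List Bool) (a : Bool) (m s : List Bool),
      x = p ++ a :: (m ++ (!a) :: s) ∧ y = p ++ (!a) :: (m ++ a :: s) := by
  intro x
  induction x with
  | nil =>
    intro y hl _ h
    cases y with
    | nil => simp [hammingDist] at h
    | cons _ _ => simp at hl
  | cons c x' ih =>
    intro y hl hcount h
    cases y with
    | nil => simp at hl
    | cons c' y' =>
      by_cases hc : c = c'
      · subst hc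
        rw [ham_cons_eq] at h
        have hcount' : x'.count true = y'.count true := by
          simp [List.count_cons] at hcount
          omega
        obtain ⟨p, a, m, s, h1, h2⟩ := ih y' (by simpa using hl) hcount' h
        exact ⟨c :: p, a, m, s, by simp [h1], by simp [h2]⟩
      · have h1 : hammingDist x' y' = 1 := by rw [ham_cons_ne hc] at h; omega
        obtain ⟨m, b, s, hx', hy'⟩ := nf1 x' y' (by simpa using hl) h1
        subst hx'; subst hy'
        have hb : b = !c ∧ c' = !c := by
          cases c <;> cases c' <;> cases b <;>
            simp_all [List.count_cons, List.count_append] <;> omega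
        obtain ⟨hb1, hb2⟩ := hb
        subst hb1; subst hb2
        exact ⟨[], c, m, s, by simp, by simp⟩

/- ### uniqueness of the two-mismatch decomposition -/

lemma getp_len (p : List Bool) (b : Bool) (r : List Bool) :
    (p ++ b :: r)[p.length]? = some b := by
  rw [List.getElem?_append_right le_rfl]
  simp

lemma mism_len_aux {p p' r r' w w' : List Bool} {b b' : Bool}
    (h1 : p ++ b :: r = p' ++ b' :: r') (h2 : p ++ (!b) :: w = p' ++ (!b') :: w')
    (hlt : p.length < p'.length) : False := by
  have e1 : some b = p'[p.length]? := by
    rw [← getp_len p b r, h1, List.getElem?_append_left hlt]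
  have e2 : some (!b) = p'[p.length]? := by
    rw [← getp_len p (!b) w, h2, List.getElem?_append_left hlt]
  rw [← e1] at e2
  simp at e2

lemma mism_len {p p' r r' w w' : List Bool} {b b' : Bool}
    (h1 : p ++ b :: r = p' ++ b' :: r') (h2 : p ++ (!b) :: w = p' ++ (!b') :: w') :
    p.length = p'.length := by
  by_contra hne
  rcases Nat.lt_or_ge p.length p'.length with hlt | hge
  · exact mism_len_aux h1 h2 hlt
  · exact mism_len_aux h1.symm h2.symm (by omega)

lemma nf_unique {p p' m m' s s' : List Bool} {a a' : Bool}
    (hx : p ++ a :: (m ++ (!a) :: s) = p' ++ a' :: (m' ++ (!a') :: s'))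
    (hy : p ++ (!a) :: (m ++ a :: s) = p' ++ (!a') :: (m' ++ a' :: s')) :
    m = m' := by
  have hp : p.length = p'.length := mism_len hx hy
  obtain ⟨hpe, hrest⟩ := List.append_inj hx hp
  obtain ⟨-, hrest'⟩ := List.append_inj hy hp
  injection hrest with ha h1
  subst ha
  injection hrest' with _h h2
  have hm : m.length = m'.length := mism_len h2 h1
  exact (List.append_inj h1 hm).1


/- ### Type B in normal form -/

lemma typeB_nf {x y : List Bool} {m0 : ℕ} (h2 : 2 ≤ m0) (h : TypeBWith m0 x y) :
    ∃ (u : List Bool) (a c : Bool) (v : List Bool),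
      x = u ++ a :: (List.replicate (m0 - 1) c ++ (!a) :: v) ∧
      y = u ++ (!a) :: (List.replicate (m0 - 1) c ++ a :: v) := by
  obtain ⟨u, v, h⟩ := h
  obtain ⟨t, rfl⟩ : ∃ t, m0 = t + 1 := ⟨m0 - 1, by omega⟩
  simp only [Nat.add_sub_cancel]
  rcases h with (⟨hx, hy⟩ | ⟨hx, hy⟩) | (⟨hx, hy⟩ | ⟨hx, hy⟩)
  · exact ⟨u, false, true, v,
      by simp [hx, List.replicate_succ, rep_shift],
      by simp [hy, List.replicate_succ, rep_shift]⟩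
  · exact ⟨u, true, true, v,
      by simp [hx, List.replicate_succ, rep_shift],
      by simp [hy, List.replicate_succ, rep_shift]⟩
  · exact ⟨u, true, false, v,
      by simp [hx, List.replicate_succ, rep_shift],
      by simp [hy, List.replicate_succ, rep_shift]⟩
  · exact ⟨u, false, false, v,
      by simp [hx, List.replicate_succ, rep_shift],
      by simp [hy, List.replicate_succ, rep_shift]⟩

lemma typeB_iff (p : List Bool) (a : Bool) (m s : List Bool) :
    TypeB (p ++ a :: (m ++ (!a) :: s)) (p ++ (!a) :: (m ++ a :: s)) ↔
      (m ≠ [] ∧ ∃ c, m = List.replicate m.length c) := by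
  constructor
  · rintro ⟨m0, hm0, h⟩
    obtain ⟨u, a', c, v, hx, hy⟩ := typeB_nf hm0 h
    have hm := nf_unique hx hy
    constructor
    · rw [hm]
      simp
      omega
    · exact ⟨c, by rw [hm, List.length_replicate]⟩
  · rintro ⟨hne, c, hc⟩
    obtain ⟨k, hk⟩ : ∃ k, m.length = k + 1 := by
      cases m with
      | nil => simp at hne
      | cons _ _ => exact ⟨_, rfl⟩
    rw [hc, hk]
    refine ⟨k + 2, by omega, p, s, ?_⟩
    cases a <;> cases c
    · -- a = false, c = false : x = p ++ (0^(k+2) 1) ++ s, y = p ++ (1 0^(k+2)) ++ s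
      right; right
      constructor <;> simp [List.replicate_succ, rep_shift]
    · -- a = false, c = true : x = p ++ (0 1^(k+2)) ++ s, y = p ++ (1^(k+2) 0) ++ s
      left; left
      constructor <;> simp [List.replicate_succ, rep_shift]
    · -- a = true, c = false : x = p ++ (1 0^(k+2)) ++ s, y = p ++ (0^(k+2) 1) ++ s
      right; left
      constructor <;> simp [List.replicate_succ, rep_shift]
    · -- a = true, c = true : x = p ++ (1^(k+2) 0) ++ s, y = p ++ (0 1^(k+2)) ++ s
      left; right
      constructor <;> simp [List.replicate_succ, rep_shift]

/- ### counting -/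

lemma head_rep {h : Bool} {t : List Bool} {c : Bool}
    (hc : h :: t = List.replicate (h :: t).length c) : c = h := by
  rw [List.length_cons, List.replicate_succ] at hc
  injection hc with e1 _
  exact e1.symm

lemma finish (m : List Bool) (g : Bool → List Bool) (hg : g true ≠ g false) (T : Prop)
    (hT : T ↔ (m ≠ [] ∧ ∃ c, m = List.replicate m.length c)) :
    ({z : List Bool | ∃ c, m = List.replicate m.length c ∧ z = g c}).ncard = 1 ↔ T := by
  rw [hT]
  cases m with
  | nil =>
    have hs : {z : List Bool | ∃ c, ([] : List Bool) = List.replicate (List.length ([] : List Bool)) c ∧ z = g c}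
        = {g true, g false} := by
      ext z
      simp only [Set.mem_setOf_eq, Set.mem_insert_iff, Set.mem_singleton_iff]
      constructor
      · rintro ⟨c, -, rfl⟩
        cases c
        · right; rfl
        · left; rfl
      · rintro (rfl | rfl)
        · exact ⟨true, by simp, rfl⟩
        · exact ⟨false, by simp, rfl⟩
    rw [hs, Set.ncard_pair hg]
    simp
  | cons h t =>
    by_cases hP : (h :: t : List Bool) = List.replicate (h :: t).length h
    · have hs : {z : List Bool | ∃ c, h :: t = List.replicate (h :: t).length c ∧ z = g c}
          = {g h} := by
        ext z
        simp only [Set.mem_setOf_eq, Set.mem_singleton_iff]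
        constructor
        · rintro ⟨c, hc, rfl⟩
          rw [head_rep hc]
        · rintro rfl
          exact ⟨h, hP, rfl⟩
      rw [hs, Set.ncard_singleton]
      constructor
      · intro _; exact ⟨by simp, h, hP⟩
      · intro _; rfl
    · have hs : {z : List Bool | ∃ c, h :: t = List.replicate (h :: t).length c ∧ z = g c}
          = (∅ : Set (List Bool)) := by
        ext z
        simp only [Set.mem_setOf_eq, Set.mem_empty_iff_false, iff_false, not_exists]
        rintro c ⟨hc, rfl⟩
        exact hP (head_rep hc ▸ hc)
      rw [hs, Set.ncard_empty]
      constructor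
      · intro h0; omega
      · rintro ⟨-, c, hc⟩
        rw [head_rep hc] at hc
        exact absurd hc hP



/-- Proposition: for `B ∈ {B^D, B^I}` and distinct balanced words at Hamming distance 2,
`|B(x) ∩ B(y)| = 1` iff `x, y` are Type-B-confusable. -/
theorem stmt11 (n : ℕ) (hn : Even n) (h2 : 2 ≤ n)
    (B : List Bool → Set (List Bool)) (hB : B = BD ∨ B = BI)
    (x y : List Bool) (hx : x ∈ balanced n) (hy : y ∈ balanced n) (hxy : x ≠ y)
    (hd : hammingDist x y = 2) :
    (B x ∩ B y).ncard = 1 ↔ TypeB x y := by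
  obtain ⟨hxl, hxc⟩ := hx
  obtain ⟨hyl, hyc⟩ := hy
  obtain ⟨p, a, m, s, hX, hY⟩ :=
    nf2 x y (by rw [hxl, hyl]) (by rw [hxc, hyc]) hd
  subst hX; subst hY
  rcases hB with rfl | rfl
  · rw [charD]
    exact finish m (fun c => p ++ c :: (m ++ s)) (by simp) _ (typeB_iff p a m s)
  · rw [charI]
    exact finish m (fun c => p ++ (!c) :: (c :: (m ++ (!c) :: s))) (by simp) _
      (typeB_iff p a m s)


end BRC
end
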